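/- arXiv:2604.08731 — 7 statements merged into one kernel-verified Lean document; each statement's English description precedes it below -/
import Mathlib

section
/- Fix q,k ≥ 2 and identify [q] with ZMod q. For a predicate f : (ZMod q)^k → {0,1}, define its width ω(f) := max_{y ∈ (ZMod q)^k} Pr_{b uniform in ZMod q}[f(y + b·(1,…,1)) = 1], and for a predicate family F define ω(F) := min_{f ∈ F} ω(f). Then for every instance Φ of Max-CSP(F), the basic LP optimum satisfies optLP(Φ) ≥ ω(F). -/
open Finset

noncomputable section

attribute [local instance] Classical.propDecidable

/-- A probability distribution on a finite set, given by its mass function. -/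
def IsDist {S : Type*} [Fintype S] (D : S → ℝ) : Prop :=
  (∀ x, 0 ≤ D x) ∧ ∑ x, D x = 1

/-- The density function of a distribution: probability times cardinality. -/
def densityFn {S : Type*} [Fintype S] (D : S → ℝ) (x : S) : ℝ :=
  (Fintype.card S : ℝ) * D x

/-- `ω = exp(2πi/q)`. -/
def omegaQ (q : ℕ) : ℂ := Complex.exp (2 * Real.pi * Complex.I / q)

/-- Fourier coefficient of `g : (ZMod q)^I → ℂ` at frequency `u`. -/
def fcoef {q : ℕ} [NeZero q] {I : Type*} [Fintype I] [DecidableEq I]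
    (g : (I → ZMod q) → ℂ) (u : I → ZMod q) : ℂ :=
  (∑ x : I → ZMod q, g x * omegaQ q ^ (-((∑ i, u i * x i : ZMod q).val : ℤ))) /
    (Fintype.card (I → ZMod q) : ℂ)

/-- Fourier coefficient of the density of a distribution. -/
def fourierDensity {q : ℕ} [NeZero q] {I : Type*} [Fintype I] [DecidableEq I]
    (D : (I → ZMod q) → ℝ) (u : I → ZMod q) : ℂ :=
  fcoef (fun x => ((densityFn D x : ℝ) : ℂ)) u

/-- Number of nonzero coordinates. -/
def wt {q : ℕ} {I : Type*} [Fintype I] (u : I → ZMod q) : ℕ :=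
  (univ.filter fun i => u i ≠ 0).card

/-- One-wise uniformity: each coordinate marginal is uniform. -/
def OneWise {q : ℕ} [NeZero q] {I : Type*} [Fintype I] [DecidableEq I]
    (Y : (I → ZMod q) → ℝ) : Prop :=
  ∀ (j : I) (b : ZMod q), (∑ y : I → ZMod q, if y j = b then Y y else 0) = 1 / q

/-- Row `j` of a matrix. -/
def mrow {q m k : ℕ} (U : Fin m × Fin k → ZMod q) (j : Fin m) : Fin k → ZMod q :=
  fun ℓ => U (j, ℓ)

/-- A matrix is singleton-free if no row has exactly one nonzero entry. -/
def SingletonFree {q m k : ℕ} (U : Fin m × Fin k → ZMod q) : Prop :=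
  ∀ j : Fin m, (univ.filter fun ℓ => U (j, ℓ) ≠ 0).card ≠ 1

/-- Row weight: number of nonzero rows. -/
def rwt {q m k : ℕ} (U : Fin m × Fin k → ZMod q) : ℕ :=
  (univ.filter fun j : Fin m => mrow U j ≠ 0).card

/-- Product distribution `Y^{⊗m}`: one independent sample of `Y` per row. -/
def prodRows {q m k : ℕ} (Y : (Fin k → ZMod q) → ℝ) (Z : Fin m × Fin k → ZMod q) : ℝ :=
  ∏ j : Fin m, Y (mrow Z j)

/-- `k`-partite hypermatchings: each column has pairwise distinct entries. -/
def PHMset (m k n : ℕ) : Finset (Fin m → Fin k → Fin n) :=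
  univ.filter fun M => ∀ ℓ : Fin k, Function.Injective fun j => M j ℓ

/-- The projection `Π^φ_M`. -/
def projMap {q m k n k' : ℕ} (φ : Fin k → Fin k') (M : Fin m → Fin k → Fin n)
    (X : Fin n × Fin k' → ZMod q) : Fin m × Fin k → ZMod q :=
  fun p => X (M p.1 p.2, φ p.2)

/-- The distribution of `Π^φ_M X − Y` for `X ∼ D` and `Y ∼ Y^{⊗m}` independent. -/
def inputDist {q m k n k' : ℕ} [NeZero q] (D : (Fin n × Fin k' → ZMod q) → ℝ)
    (Y : (Fin k → ZMod q) → ℝ) (φ : Fin k → Fin k') (M : Fin m → Fin k → Fin n) :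
    (Fin m × Fin k → ZMod q) → ℝ :=
  fun Z => ∑ X : Fin n × Fin k' → ZMod q, D X * prodRows Y (projMap φ M X - Z)

/-- Normalized 1-norm (expectation of absolute value). -/
def norm1 {S : Type*} [Fintype S] (g : S → ℂ) : ℝ :=
  (∑ x, ‖g x‖) / (Fintype.card S : ℝ)

/-- Sup-norm. -/
def normInf {S : Type*} [Fintype S] (g : S → ℂ) : ℝ := ⨆ x, ‖g x‖

/-- Square of the normalized 2-norm. -/
def norm2sq {S : Type*} [Fintype S] (g : S → ℂ) : ℝ :=
  (∑ x, ‖g x‖ ^ 2) / (Fintype.card S : ℝ)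

/-- The Fourier bound function `U_{C,s}(h; N)`. -/
def UBound (q : ℕ) (C : ℝ) (s h N : ℕ) : ℝ :=
  if h = 0 then 1
  else if h ≤ s then (C * Real.sqrt ((s : ℝ) * N) / h) ^ ((h : ℝ) / 2)
  else min ((C * Real.sqrt (N : ℝ) / Real.sqrt (h : ℝ)) ^ ((h : ℝ) / 2))
       ((Real.exp 1 * (q : ℝ) ^ 2 * N / h) ^ ((h : ℝ) / 2))

/-- `(C,s)`-boundedness of a distribution. -/
def IsBounded (q : ℕ) [NeZero q] {I : Type*} [Fintype I] [DecidableEq I] (C : ℝ) (s : ℕ)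
    (D : (I → ZMod q) → ℝ) : Prop :=
  ∀ h : ℕ, 1 ≤ h → h ≤ Fintype.card I →
    ∑ u ∈ univ.filter (fun u : I → ZMod q => wt u = h), ‖fourierDensity D u‖
      ≤ UBound q C s h (Fintype.card I)

/-- A constraint: a predicate together with a tuple of variables. -/
abbrev Cstr (q k : ℕ) (V : Type*) := ((Fin k → ZMod q) → Bool) × (Fin k → V)

/-- A valid instance of `Max-CSP(F)`: a nonempty list of constraints whose predicates
lie in `F` and whose variable tuples consist of distinct variables. -/
def ValidInstance {q k : ℕ} {V : Type*} (F : Set ((Fin k → ZMod q) → Bool))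
    (Φ : List (Cstr q k V)) : Prop :=
  Φ ≠ [] ∧ ∀ C ∈ Φ, C.1 ∈ F ∧ Function.Injective C.2

/-- The marginal of a distribution on `(ZMod q)^k` at coordinate `ℓ`. -/
def marg {q k : ℕ} [NeZero q] (D : (Fin k → ZMod q) → ℝ) (ℓ : Fin k) (b : ZMod q) : ℝ :=
  ∑ a : Fin k → ZMod q, if a ℓ = b then D a else 0

/-- A feasible solution of the basic LP: local distributions with consistent marginals. -/
def LPfeasible {q k : ℕ} [NeZero q] {V : Type*} (Φ : List (Cstr q k V))
    (Y : Cstr q k V → (Fin k → ZMod q) → ℝ) : Prop :=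
  (∀ C ∈ Φ, IsDist (Y C)) ∧
  ∀ C ∈ Φ, ∀ C' ∈ Φ, ∀ ℓ ℓ' : Fin k, C.2 ℓ = C'.2 ℓ' →
    ∀ b : ZMod q, marg (Y C) ℓ b = marg (Y C') ℓ' b

/-- The value of a basic-LP solution: the average over constraints of the local expected
satisfaction probability. -/
def LPvalue {q k : ℕ} [NeZero q] {V : Type*} (Φ : List (Cstr q k V))
    (Y : Cstr q k V → (Fin k → ZMod q) → ℝ) : ℝ :=
  ((Φ.map fun C => ∑ a : Fin k → ZMod q, if C.1 a then Y C a else 0).sum) / (Φ.length : ℝ)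

/-- The optimum of the basic LP. -/
def optLP {q k : ℕ} [NeZero q] {V : Type*} (Φ : List (Cstr q k V)) : ℝ :=
  sSup {v | ∃ Y, LPfeasible Φ Y ∧ LPvalue Φ Y = v}

/-- The width of a predicate: the maximum over `y` of the probability over a uniform
`b ∈ ZMod q` that `f(y + b·(1,…,1)) = 1`. -/
def width {q k : ℕ} [NeZero q] (f : (Fin k → ZMod q) → Bool) : ℝ :=
  ⨆ y : Fin k → ZMod q,
    (∑ b : ZMod q, if f (fun i => y i + b) then (1 : ℝ) else 0) / (q : ℝ)

/-- The width of a predicate family: the minimum width of its members. -/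
def widthF {q k : ℕ} [NeZero q] (F : Set ((Fin k → ZMod q) → Bool)) : ℝ :=
  sInf (width '' F)

/-- Key computation: expectation of `w` against the shifted point-mass mixture. -/
lemma keySum (q k : ℕ) [NeZero q] (y : Fin k → ZMod q) (w : (Fin k → ZMod q) → ℝ) :
    (∑ a : Fin k → ZMod q,
      w a * ((∑ b : ZMod q, if a = (fun i => y i + b) then (1:ℝ) else 0) / (q:ℝ)))
      = (∑ b : ZMod q, w (fun i => y i + b)) / (q:ℝ) := by
  have h1 : ∀ a : Fin k → ZMod q,
      w a * ((∑ b : ZMod q, if a = (fun i => y i + b) then (1:ℝ) else 0) / (q:ℝ))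
      = (∑ b : ZMod q, if a = (fun i => y i + b) then w a else 0) / (q:ℝ) := by
    intro a
    rw [← mul_div_assoc, Finset.mul_sum]
    congr 1
    refine Finset.sum_congr rfl fun b _ => ?_
    split_ifs <;> ring
  simp only [h1]
  rw [← Finset.sum_div]
  congr 1
  rw [Finset.sum_comm]
  refine Finset.sum_congr rfl fun b _ => ?_
  simp [Finset.sum_ite_eq']

lemma width_eq_max {q k : ℕ} [NeZero q] (f : (Fin k → ZMod q) → Bool) :
    ∃ y : Fin k → ZMod q, width f
      = (∑ b : ZMod q, if f (fun i => y i + b) then (1:ℝ) else 0) / (q:ℝ) := by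
  obtain ⟨y, hy⟩ := Finite.exists_max
    (fun y : Fin k → ZMod q =>
      (∑ b : ZMod q, if f (fun i => y i + b) then (1:ℝ) else 0) / (q:ℝ))
  refine ⟨y, le_antisymm (ciSup_le hy) ?_⟩
  exact le_ciSup (f := fun y : Fin k → ZMod q =>
    (∑ b : ZMod q, if f (fun i => y i + b) then (1:ℝ) else 0) / (q:ℝ))
    (Set.Finite.bddAbove (Set.finite_range _)) y

lemma width_nonneg {q k : ℕ} [NeZero q] (f : (Fin k → ZMod q) → Bool) :
    0 ≤ width f := by
  obtain ⟨y, hy⟩ := width_eq_max f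
  rw [hy]
  apply div_nonneg _ (by positivity)
  exact Finset.sum_nonneg fun b _ => by positivity

/-- For every instance `Φ` of `Max-CSP(F)`, the basic LP optimum is at
least the width `ω(F)`. -/
theorem width_le_optLP
    (q k : ℕ) [NeZero q] (hq : 2 ≤ q) (hk : 2 ≤ k)
    (V : Type*) [Fintype V] (F : Set ((Fin k → ZMod q) → Bool))
    (Φ : List (Cstr q k V)) (hΦ : ValidInstance F Φ) :
    widthF F ≤ optLP Φ := by
  classical
  obtain ⟨hne, hmem⟩ := hΦ
  have hq0 : (0:ℝ) < (q:ℝ) := by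
    have : 0 < q := Nat.lt_of_lt_of_le (by norm_num) hq
    exact_mod_cast this
  have hlen : 0 < Φ.length := List.length_pos_iff.mpr hne
  have hlenR : (0:ℝ) < (Φ.length : ℝ) := by exact_mod_cast hlen
  -- choose maximizers
  choose ymax hymax using fun f : (Fin k → ZMod q) → Bool => width_eq_max f
  -- the LP solution
  set Y : Cstr q k V → (Fin k → ZMod q) → ℝ :=
    fun C a => (∑ b : ZMod q, if a = (fun i => ymax C.1 i + b) then (1:ℝ) else 0) / (q:ℝ)
    with hY
  -- generic expectation formula
  have hexp : ∀ (C : Cstr q k V) (w : (Fin k → ZMod q) → ℝ),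
      (∑ a : Fin k → ZMod q, w a * Y C a)
        = (∑ b : ZMod q, w (fun i => ymax C.1 i + b)) / (q:ℝ) :=
    fun C w => keySum q k (ymax C.1) w
  have hYnn : ∀ C a, 0 ≤ Y C a := by
    intro C a
    apply div_nonneg _ hq0.le
    exact Finset.sum_nonneg fun b _ => by positivity
  have hYsum : ∀ C, ∑ a : Fin k → ZMod q, Y C a = 1 := by
    intro C
    have := hexp C (fun _ => 1)
    simp only [one_mul] at this
    rw [this]
    rw [Finset.sum_const, Finset.card_univ, ZMod.card, nsmul_eq_mul, mul_one,
      div_self hq0.ne']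
  have hmarg : ∀ (C : Cstr q k V) (ℓ : Fin k) (b' : ZMod q),
      marg (Y C) ℓ b' = 1 / (q:ℝ) := by
    intro C ℓ b'
    unfold marg
    have h1 : ∀ a : Fin k → ZMod q,
        (if a ℓ = b' then Y C a else 0)
          = (if a ℓ = b' then (1:ℝ) else 0) * Y C a := by
      intro a; split_ifs <;> simp
    simp only [h1]
    rw [hexp C (fun a => if a ℓ = b' then (1:ℝ) else 0)]
    have h2 : ∀ b : ZMod q,
        (if ymax C.1 ℓ + b = b' then (1:ℝ) else 0)
          = (if b = b' - ymax C.1 ℓ then (1:ℝ) else 0) := by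
      intro b
      congr 1
      simp only [eq_iff_iff]
      constructor
      · intro h; rw [← h]; ring
      · intro h; rw [h]; ring
    simp only [h2]
    rw [Finset.sum_ite_eq']
    simp
  have hfeas : LPfeasible Φ Y := by
    refine ⟨fun C _ => ⟨hYnn C, hYsum C⟩, fun C _ C' _ ℓ ℓ' _ b => ?_⟩
    rw [hmarg, hmarg]
  have hval : ∀ C : Cstr q k V,
      (∑ a : Fin k → ZMod q, if C.1 a then Y C a else 0) = width C.1 := by
    intro C
    have h1 : ∀ a : Fin k → ZMod q,
        (if C.1 a then Y C a else 0) = (if C.1 a then (1:ℝ) else 0) * Y C a := by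
      intro a; split_ifs <;> simp
    simp only [h1]
    rw [hexp C (fun a => if C.1 a then (1:ℝ) else 0), hymax C.1]
  -- widthF is a lower bound on each constraint's width
  have hwF : ∀ C ∈ Φ, widthF F ≤ width C.1 := by
    intro C hC
    apply csInf_le
    · exact ⟨0, fun w ⟨f, _, hw⟩ => hw ▸ width_nonneg f⟩
    · exact ⟨C.1, (hmem C hC).1, rfl⟩
  -- lower bound on LPvalue
  have hLPv : widthF F ≤ LPvalue Φ Y := by
    unfold LPvalue
    rw [le_div_iff₀ hlenR]
    have : ((Φ.map fun C => ∑ a : Fin k → ZMod q, if C.1 a then Y C a else 0).sum)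
        ≥ (Φ.map fun C => ∑ a : Fin k → ZMod q, if C.1 a then Y C a else 0).length
          • (widthF F) := by
      apply List.card_nsmul_le_sum
      intro x hx
      obtain ⟨C, hC, rfl⟩ := List.mem_map.mp hx
      rw [hval C]
      exact hwF C hC
    rw [List.length_map] at this
    calc widthF F * (Φ.length : ℝ) = Φ.length • widthF F := by
          rw [nsmul_eq_mul]; ring
      _ ≤ _ := this
  -- the set of LP values is bounded above by 1
  have hbdd : BddAbove {v | ∃ Y', LPfeasible Φ Y' ∧ LPvalue Φ Y' = v} := by
    refine ⟨1, fun v hv => ?_⟩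
    obtain ⟨Y', hfeas', rfl⟩ := hv
    unfold LPvalue
    rw [div_le_one hlenR]
    have : ((Φ.map fun C => ∑ a : Fin k → ZMod q, if C.1 a then Y' C a else 0).sum)
        ≤ (Φ.map fun C => ∑ a : Fin k → ZMod q, if C.1 a then Y' C a else 0).length
          • (1:ℝ) := by
      apply List.sum_le_card_nsmul
      intro x hx
      obtain ⟨C, hC, rfl⟩ := List.mem_map.mp hx
      obtain ⟨hnn, hsum⟩ := hfeas'.1 C hC
      calc (∑ a : Fin k → ZMod q, if C.1 a then Y' C a else 0)
          ≤ ∑ a : Fin k → ZMod q, Y' C a := by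
            apply Finset.sum_le_sum
            intro a _
            split_ifs
            · exact le_refl _
            · exact hnn a
        _ = 1 := hsum
    rw [List.length_map, nsmul_eq_mul, mul_one] at this
    exact this
  calc widthF F ≤ LPvalue Φ Y := hLPv
    _ ≤ optLP Φ := le_csSup hbdd ⟨Y, hfeas, rfl⟩

end
end

section
/- Let q ≥ 2, let k,m ∈ ℕ, let Y be a one-wise uniform distribution on (ZMod q)^k, and let U ∈ (ZMod q)^{m×k}. If U is not singleton-free, i.e., there exists a row index j ∈ [m] such that the j-th row U_j of U has exactly one nonzero entry, then the Fourier coefficient of the density of the product distribution Y^{⊗m} at U vanishes: μ̂_{Y^{⊗m}}(U) = 0. -/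
open Finset

noncomputable section

attribute [local instance] Classical.propDecidable

lemma omegaQ_ne_zero (q : ℕ) : omegaQ q ≠ 0 := Complex.exp_ne_zero _

lemma omegaQ_zpow (q : ℕ) (n : ℤ) :
    omegaQ q ^ n = Complex.exp (n * (2 * Real.pi * Complex.I / q)) := by
  rw [omegaQ, Complex.exp_int_mul]

lemma omegaQ_zpow_congr (q : ℕ) [NeZero q] {a b : ℤ} (h : (q : ℤ) ∣ a - b) :
    omegaQ q ^ a = omegaQ q ^ b := by
  obtain ⟨t, ht⟩ := h
  have ha : a = b + q * t := by linarith
  have hq : (q : ℂ) ≠ 0 := Nat.cast_ne_zero.mpr (NeZero.ne q)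
  rw [ha, omegaQ_zpow, omegaQ_zpow]
  push_cast
  rw [add_mul, Complex.exp_add]
  have : ((q : ℂ) * t) * (2 * Real.pi * Complex.I / q) = t * (2 * Real.pi * Complex.I) := by
    field_simp
  rw [this, Complex.exp_int_mul_two_pi_mul_I, mul_one]

/-- The conjugate character `a ↦ ω^{-a.val}`. -/
def chiQ (q : ℕ) (a : ZMod q) : ℂ := omegaQ q ^ (-(a.val : ℤ))

lemma chiQ_add (q : ℕ) [NeZero q] (a b : ZMod q) :
    chiQ q (a + b) = chiQ q a * chiQ q b := by
  unfold chiQ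
  rw [← zpow_add₀ (omegaQ_ne_zero q)]
  apply omegaQ_zpow_congr
  have h := ZMod.val_add a b
  have h2 : (a.val + b.val) % q + q * ((a.val + b.val) / q) = a.val + b.val :=
    Nat.mod_add_div _ _
  refine ⟨((a.val + b.val) / q : ℕ), ?_⟩
  push_cast [h]
  push_cast at h2
  linarith

lemma chiQ_zero (q : ℕ) [NeZero q] : chiQ q 0 = 1 := by
  simp [chiQ, ZMod.val_zero]

lemma chiQ_sum (q : ℕ) [NeZero q] {ι : Type*} (s : Finset ι) (f : ι → ZMod q) :
    chiQ q (∑ i ∈ s, f i) = ∏ i ∈ s, chiQ q (f i) := by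
  induction s using Finset.cons_induction with
  | empty => simp [chiQ_zero]
  | cons a s ha ih => rw [Finset.sum_cons, Finset.prod_cons, chiQ_add, ih]

lemma chiQ_ne_one (q : ℕ) [NeZero q] {c : ZMod q} (hc : c ≠ 0) : chiQ q c ≠ 1 := by
  intro h
  rw [chiQ, omegaQ_zpow, Complex.exp_eq_one_iff] at h
  obtain ⟨n, hn⟩ := h
  have hq : (q : ℂ) ≠ 0 := Nat.cast_ne_zero.mpr (NeZero.ne q)
  have hpi : (2 * (Real.pi : ℂ) * Complex.I) ≠ 0 := by
    simp [Real.pi_ne_zero, Complex.I_ne_zero]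
  have key : (-(c.val : ℤ) : ℂ) = n * q := by
    push_cast [-ZMod.natCast_val] at hn
    have h2 : (-(c.val : ℤ) : ℂ) / q * (2 * Real.pi * Complex.I) = n * (2 * Real.pi * Complex.I) := by
      push_cast [-ZMod.natCast_val]
      rw [← hn]; ring
    have h3 : (-(c.val : ℤ) : ℂ) / q = n := mul_right_cancel₀ hpi h2
    rw [div_eq_iff hq] at h3
    rw [h3]
  have key2 : -(c.val : ℤ) = n * q := by exact_mod_cast key
  have hdvd : (q : ℤ) ∣ (c.val : ℤ) := ⟨-n, by linarith⟩
  have hlt : c.val < q := ZMod.val_lt c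
  have hne : c.val ≠ 0 := fun h0 => hc (by rwa [← ZMod.val_eq_zero])
  have := Int.le_of_dvd (by exact_mod_cast Nat.pos_of_ne_zero hne) hdvd
  omega

lemma sum_chiQ_mul (q : ℕ) [NeZero q] {c : ZMod q} (hc : c ≠ 0) :
    ∑ b : ZMod q, chiQ q (c * b) = 0 := by
  have key : (∑ b : ZMod q, chiQ q (c * b)) * chiQ q c = ∑ b : ZMod q, chiQ q (c * b) := by
    rw [Finset.sum_mul]
    have h1 : ∀ b : ZMod q, chiQ q (c * b) * chiQ q c = chiQ q (c * (b + 1)) := by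
      intro b; rw [mul_add, mul_one, chiQ_add]
    rw [Finset.sum_congr rfl fun b _ => h1 b]
    exact Fintype.sum_equiv (Equiv.addRight 1) _ _ (fun b => rfl)
  have h2 : (∑ b : ZMod q, chiQ q (c * b)) * (chiQ q c - 1) = 0 := by
    rw [mul_sub, key, mul_one, sub_self]
  rcases mul_eq_zero.mp h2 with h | h
  · exact h
  · exact absurd (sub_eq_zero.mp h) (chiQ_ne_one q hc)


/-- If `Y` is one-wise uniform on `(ZMod q)^k` and `U ∈ (ZMod q)^{m×k}`
is not singleton-free (some row has exactly one nonzero entry), then the Fourier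
coefficient of the density of `Y^{⊗m}` at `U` vanishes. -/
theorem prod_onewise_fourier_vanish
    (q : ℕ) [NeZero q] (hq : 2 ≤ q) (k m : ℕ)
    (Y : (Fin k → ZMod q) → ℝ) (hY : IsDist Y) (hY1 : OneWise Y)
    (U : Fin m × Fin k → ZMod q)
    (hU : ∃ j : Fin m, (univ.filter fun ℓ => U (j, ℓ) ≠ 0).card = 1) :
    fourierDensity (prodRows Y) U = 0 := by
  classical
  obtain ⟨j₀, hj⟩ := hU
  have hcard : (Fintype.card (Fin m × Fin k → ZMod q) : ℂ) ≠ 0 :=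
    Nat.cast_ne_zero.mpr Fintype.card_ne_zero
  have hFD : fourierDensity (prodRows Y) U
      = ∑ Z : Fin m × Fin k → ZMod q,
          (prodRows Y Z : ℂ) * chiQ q (∑ p, U p * Z p) := by
    unfold fourierDensity fcoef densityFn chiQ
    have hterm : ∀ Z : Fin m × Fin k → ZMod q,
        ((((Fintype.card (Fin m × Fin k → ZMod q) : ℝ) * prodRows Y Z : ℝ)) : ℂ) *
          omegaQ q ^ (-(((∑ p, U p * Z p : ZMod q)).val : ℤ))
        = (Fintype.card (Fin m × Fin k → ZMod q) : ℂ) *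
          ((prodRows Y Z : ℂ) * omegaQ q ^ (-(((∑ p, U p * Z p : ZMod q)).val : ℤ))) := by
      intro Z; push_cast; ring
    rw [Finset.sum_congr rfl fun Z _ => hterm Z, ← Finset.mul_sum]
    field_simp
  rw [hFD]
  have hsum : ∑ Z : Fin m × Fin k → ZMod q, (prodRows Y Z : ℂ) * chiQ q (∑ p, U p * Z p)
      = ∑ W : Fin m → Fin k → ZMod q,
          ∏ j, ((Y (W j) : ℂ) * chiQ q (∑ ℓ, U (j, ℓ) * W j ℓ)) := by
    rw [← Equiv.sum_comp (Equiv.curry (Fin m) (Fin k) (ZMod q)).symm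
      (fun Z => (prodRows Y Z : ℂ) * chiQ q (∑ p, U p * Z p))]
    refine Finset.sum_congr rfl fun W _ => ?_
    have h1 : prodRows Y ((Equiv.curry (Fin m) (Fin k) (ZMod q)).symm W) = ∏ j, Y (W j) := rfl
    have h2 : (∑ p : Fin m × Fin k, U p * (Equiv.curry (Fin m) (Fin k) (ZMod q)).symm W p)
        = ∑ j, ∑ ℓ, U (j, ℓ) * W j ℓ :=
      Fintype.sum_prod_type (f := fun p : Fin m × Fin k => U p * W p.1 p.2)
    rw [h1, h2, chiQ_sum]
    push_cast
    rw [← Finset.prod_mul_distrib]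
  rw [hsum, ← Fintype.piFinset_univ,
    (Finset.prod_univ_sum (fun _ : Fin m => (univ : Finset (Fin k → ZMod q)))
      (fun j y => (Y y : ℂ) * chiQ q (∑ ℓ, U (j, ℓ) * y ℓ))).symm]
  apply Finset.prod_eq_zero (Finset.mem_univ j₀)
  obtain ⟨ℓ₀, hℓ⟩ := Finset.card_eq_one.mp hj
  set c := U (j₀, ℓ₀) with hcdef
  have hc : c ≠ 0 := by
    have : ℓ₀ ∈ univ.filter fun ℓ => U (j₀, ℓ) ≠ 0 := by
      rw [hℓ]; exact Finset.mem_singleton_self ℓ₀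
    exact (Finset.mem_filter.mp this).2
  have hzero : ∀ ℓ, ℓ ≠ ℓ₀ → U (j₀, ℓ) = 0 := by
    intro ℓ hne
    by_contra h
    have : ℓ ∈ univ.filter fun ℓ => U (j₀, ℓ) ≠ 0 := Finset.mem_filter.mpr ⟨Finset.mem_univ ℓ, h⟩
    rw [hℓ, Finset.mem_singleton] at this
    exact hne this
  have hlin : ∀ y : Fin k → ZMod q, (∑ ℓ, U (j₀, ℓ) * y ℓ) = c * y ℓ₀ := fun y =>
    Finset.sum_eq_single ℓ₀ (fun ℓ _ hne => by rw [hzero ℓ hne, zero_mul])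
      (fun h => absurd (Finset.mem_univ ℓ₀) h)
  calc ∑ y : Fin k → ZMod q, (Y y : ℂ) * chiQ q (∑ ℓ, U (j₀, ℓ) * y ℓ)
      = ∑ y : Fin k → ZMod q, ∑ b : ZMod q,
          if y ℓ₀ = b then (Y y : ℂ) * chiQ q (c * b) else 0 := by
        refine Finset.sum_congr rfl fun y _ => ?_
        rw [Finset.sum_ite_eq univ (y ℓ₀) (fun b => (Y y : ℂ) * chiQ q (c * b))]
        simp [hlin y]
    _ = ∑ b : ZMod q, ∑ y : Fin k → ZMod q,
          if y ℓ₀ = b then (Y y : ℂ) * chiQ q (c * b) else 0 := Finset.sum_comm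
    _ = ∑ b : ZMod q, chiQ q (c * b) * ((1 / q : ℝ) : ℂ) := by
        refine Finset.sum_congr rfl fun b _ => ?_
        have : ∀ y : Fin k → ZMod q,
            (if y ℓ₀ = b then (Y y : ℂ) * chiQ q (c * b) else 0)
            = chiQ q (c * b) * ((if y ℓ₀ = b then Y y else 0 : ℝ) : ℂ) := by
          intro y; split <;> simp [mul_comm]
        rw [Finset.sum_congr rfl fun y _ => this y, ← Finset.mul_sum]
        congr 1
        rw [← Complex.ofReal_sum]
        exact_mod_cast congrArg (fun r : ℝ => (r : ℂ)) (hY1 ℓ₀ b)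
    _ = 0 := by rw [← Finset.sum_mul, sum_chiQ_mul q hc, zero_mul]

end
end

section
/- Let q ≥ 2, let m,k,n,k' ∈ ℕ with k ≤ k', let φ : [k] → [k'] be an injection, let M ∈ PHM(m,k,n), let Y be a one-wise uniform distribution on (ZMod q)^k, and let D be any probability distribution on (ZMod q)^{n×k'}. Then ‖μ_{Input(D,M)} − 1‖_∞ ≤ Σ |μ̂_D(U)|, where the sum ranges over all nonzero U ∈ (ZMod q)^{n×k'} such that supp(U) ⊆ φ(supp(M)) and, for every j ∈ [m], |supp(U) ∩ φ(supp(M_j))| ≠ 1. Here supp(U) := {(i,c) ∈ [n]×[k'] : U_{i,c} ≠ 0} and φ(S) := {(i,φ(ℓ)) : (i,ℓ) ∈ S} for S ⊆ [n]×[k]. -/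
open Finset

noncomputable section

attribute [local instance] Classical.propDecidable

/-- The support of a vector, as a finset. -/
def suppF {q : ℕ} {I : Type*} [Fintype I] (u : I → ZMod q) : Finset I :=
  univ.filter fun i => u i ≠ 0

/-- `φ(supp(M_j))`: the `j`-th hyperedge of `M`, embedded into `[n]×[k']` via `φ`. -/
def edgePhi {m k n k' : ℕ} (φ : Fin k → Fin k') (M : Fin m → Fin k → Fin n) (j : Fin m) :
    Finset (Fin n × Fin k') :=
  univ.image fun ℓ => (M j ℓ, φ ℓ)

namespace SF5Aux

variable {q : ℕ} [NeZero q]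

/-- Dot product of two vectors over `ZMod q`. -/
def dotP {I : Type*} [Fintype I] (u x : I → ZMod q) : ZMod q := ∑ i, u i * x i

lemma omega_zpow_val (a : ZMod q) : omegaQ q ^ ((a.val : ℤ)) = ZMod.stdAddChar a := by
  have h2 : (((a.val : ℤ)) : ZMod q) = a := by
    push_cast
    simp [ZMod.natCast_val, ZMod.cast_id]
  have h := ZMod.stdAddChar_coe (N := q) (a.val : ℤ)
  rw [h2] at h
  rw [h, omegaQ, zpow_natCast, ← Complex.exp_nat_mul]
  congr 1
  push_cast
  ring

lemma omega_zpow_neg_val (a : ZMod q) :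
    omegaQ q ^ (-(a.val : ℤ)) = (ZMod.stdAddChar a)⁻¹ := by
  rw [zpow_neg, omega_zpow_val]

lemma psi_abs (a : ZMod q) : ‖(ZMod.stdAddChar a : ℂ)‖ = 1 := by
  rw [ZMod.stdAddChar_apply]; exact Circle.norm_coe _

lemma psi_sum {ι : Type*} (s : Finset ι) (f : ι → ZMod q) :
    (ZMod.stdAddChar (∑ i ∈ s, f i) : ℂ) = ∏ i ∈ s, (ZMod.stdAddChar (f i) : ℂ) := by
  classical
  induction s using Finset.cons_induction with
  | empty => simp
  | cons a s ha ih => rw [Finset.sum_cons, Finset.prod_cons, AddChar.map_add_eq_mul, ih]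

lemma sum_psi (t : ZMod q) :
    ∑ a : ZMod q, (ZMod.stdAddChar (t * a) : ℂ) = if t = 0 then (q : ℂ) else 0 := by
  split_ifs with h
  · simp [h, ZMod.card]
  · exact AddChar.sum_eq_zero_of_ne_one (ZMod.isPrimitive_stdAddChar q h)

lemma sum_psi_dot {I : Type*} [Fintype I] [DecidableEq I] (u : I → ZMod q) :
    ∑ V : I → ZMod q, (ZMod.stdAddChar (dotP V u) : ℂ)
      = if u = 0 then ((Fintype.card (I → ZMod q)) : ℂ) else 0 := by
  have h1 : ∀ V : I → ZMod q, (ZMod.stdAddChar (dotP V u) : ℂ)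
      = ∏ i, (ZMod.stdAddChar (u i * V i) : ℂ) := by
    intro V
    rw [dotP, psi_sum]
    exact Finset.prod_congr rfl fun i _ => by rw [mul_comm]
  simp_rw [h1]
  rw [← Fintype.prod_sum (fun i a => (ZMod.stdAddChar (u i * a) : ℂ))]
  simp_rw [sum_psi]
  split_ifs with h
  · subst h
    simp only [Pi.zero_apply, if_pos rfl]
    rw [Finset.prod_const]
    simp [Fintype.card_fun, ZMod.card]
  · obtain ⟨i, hi⟩ := Function.ne_iff.mp h
    have hi' : u i ≠ 0 := by simpa using hi
    exact Finset.prod_eq_zero (Finset.mem_univ i) (by simp [hi'])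

lemma fourierDensity_eq {I : Type*} [Fintype I] [DecidableEq I] (D : (I → ZMod q) → ℝ)
    (u : I → ZMod q) :
    fourierDensity D u
      = ∑ X : I → ZMod q, (D X : ℂ) * (ZMod.stdAddChar (dotP u X) : ℂ)⁻¹ := by
  rw [fourierDensity, fcoef]
  have hc : ((Fintype.card (I → ZMod q) : ℕ) : ℂ) ≠ 0 :=
    Nat.cast_ne_zero.mpr Fintype.card_ne_zero
  have hterm : ∀ X : I → ZMod q,
      ((densityFn D X : ℝ) : ℂ) * omegaQ q ^ (-(((∑ i, u i * X i : ZMod q)).val : ℤ))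
        = ((Fintype.card (I → ZMod q) : ℕ) : ℂ)
            * ((D X : ℂ) * (ZMod.stdAddChar (dotP u X) : ℂ)⁻¹) := by
    intro X
    rw [omega_zpow_neg_val, densityFn, dotP]
    push_cast
    ring
  simp_rw [hterm]
  rw [← Finset.mul_sum, mul_div_cancel_left₀ _ hc]

/-- Fourier transform of one row-factor of the product distribution. -/
def psiY {k : ℕ} (Y : (Fin k → ZMod q) → ℝ) (v : Fin k → ZMod q) : ℂ :=
  ∑ y : Fin k → ZMod q, (Y y : ℂ) * (ZMod.stdAddChar (dotP v y) : ℂ)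

lemma psiY_abs_le {k : ℕ} (Y : (Fin k → ZMod q) → ℝ) (hY : IsDist Y) (v : Fin k → ZMod q) :
    ‖psiY Y v‖ ≤ 1 := by
  calc ‖psiY Y v‖
      ≤ ∑ y : Fin k → ZMod q, ‖(Y y : ℂ) * (ZMod.stdAddChar (dotP v y) : ℂ)‖ :=
        norm_sum_le _ _
    _ = ∑ y : Fin k → ZMod q, Y y := by
        refine Finset.sum_congr rfl fun y _ => ?_
        rw [norm_mul, psi_abs, mul_one, Complex.norm_real, Real.norm_eq_abs, abs_of_nonneg (hY.1 y)]
    _ = 1 := hY.2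

lemma psiY_zero {k : ℕ} (Y : (Fin k → ZMod q) → ℝ) (hY : IsDist Y) :
    psiY Y (0 : Fin k → ZMod q) = 1 := by
  rw [psiY]
  simp only [dotP, Pi.zero_apply, zero_mul, Finset.sum_const_zero,
    AddChar.map_zero_eq_one, mul_one]
  exact_mod_cast hY.2

lemma psiY_singleton {k : ℕ} (Y : (Fin k → ZMod q) → ℝ) (hY1 : OneWise Y)
    (v : Fin k → ZMod q) (hv : (univ.filter fun ℓ => v ℓ ≠ 0).card = 1) :
    psiY Y v = 0 := by
  obtain ⟨ℓ₀, hℓ₀⟩ := Finset.card_eq_one.mp hv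
  have hv0 : v ℓ₀ ≠ 0 := by
    have : ℓ₀ ∈ univ.filter fun ℓ => v ℓ ≠ 0 := hℓ₀ ▸ Finset.mem_singleton_self ℓ₀
    exact (Finset.mem_filter.mp this).2
  have hvz : ∀ ℓ, ℓ ≠ ℓ₀ → v ℓ = 0 := by
    intro ℓ hℓ
    by_contra hcon
    have : ℓ ∈ univ.filter fun ℓ => v ℓ ≠ 0 :=
      Finset.mem_filter.mpr ⟨Finset.mem_univ _, hcon⟩
    rw [hℓ₀, Finset.mem_singleton] at this
    exact hℓ this
  have hdot : ∀ y : Fin k → ZMod q, dotP v y = v ℓ₀ * y ℓ₀ := by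
    intro y
    rw [dotP]
    exact Finset.sum_eq_single ℓ₀ (fun ℓ _ hℓ => by rw [hvz ℓ hℓ, zero_mul])
      (fun h => absurd (Finset.mem_univ ℓ₀) h)
  have hfib : ∀ b : ZMod q,
      (∑ y ∈ univ.filter (fun y : Fin k → ZMod q => y ℓ₀ = b), (Y y : ℂ))
        = ((1 / q : ℝ) : ℂ) := by
    intro b
    rw [Finset.sum_filter]
    have h2 : ∀ y : Fin k → ZMod q,
        (if y ℓ₀ = b then (Y y : ℂ) else 0) = ((if y ℓ₀ = b then Y y else 0 : ℝ) : ℂ) := by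
      intro y; split_ifs <;> simp
    rw [Finset.sum_congr rfl fun y _ => h2 y, ← Complex.ofReal_sum, hY1 ℓ₀ b]
  have key : psiY Y v
      = ∑ b : ZMod q, ∑ y ∈ univ.filter (fun y : Fin k → ZMod q => y ℓ₀ = b),
          (Y y : ℂ) * (ZMod.stdAddChar (v ℓ₀ * b) : ℂ) := by
    rw [psiY, ← Finset.sum_fiberwise univ (fun y : Fin k → ZMod q => y ℓ₀)
        (fun y => (Y y : ℂ) * (ZMod.stdAddChar (dotP v y) : ℂ))]
    refine Finset.sum_congr rfl fun b _ => Finset.sum_congr rfl fun y hy => ?_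
    rw [hdot, (Finset.mem_filter.mp hy).2]
  rw [key]
  calc (∑ b : ZMod q, ∑ y ∈ univ.filter (fun y : Fin k → ZMod q => y ℓ₀ = b),
          (Y y : ℂ) * (ZMod.stdAddChar (v ℓ₀ * b) : ℂ))
      = ∑ b : ZMod q, ((1 / q : ℝ) : ℂ) * (ZMod.stdAddChar (v ℓ₀ * b) : ℂ) := by
        refine Finset.sum_congr rfl fun b _ => ?_
        rw [← Finset.sum_mul, hfib b]
    _ = ((1 / q : ℝ) : ℂ) * ∑ b : ZMod q, (ZMod.stdAddChar (v ℓ₀ * b) : ℂ) := by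
        rw [Finset.mul_sum]
    _ = 0 := by rw [sum_psi, if_neg hv0, mul_zero]

section Matrices

variable {m k n k' : ℕ} (φ : Fin k → Fin k') (M : Fin m → Fin k → Fin n)

/-- The adjoint of `projMap φ M`. -/
def adjV (V : Fin m × Fin k → ZMod q) : Fin n × Fin k' → ZMod q :=
  fun p => ∑ r : Fin m × Fin k, if (M r.1 r.2, φ r.2) = p then V r else 0

variable {φ M}

lemma e_eq_iff (hφ : Function.Injective φ)
    (hcol : ∀ ℓ : Fin k, Function.Injective fun j => M j ℓ)
    {r : Fin m × Fin k} {j : Fin m} {ℓ : Fin k} :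
    (M r.1 r.2, φ r.2) = (M j ℓ, φ ℓ) ↔ r = (j, ℓ) := by
  constructor
  · intro h
    have h2 : r.2 = ℓ := hφ (congrArg Prod.snd h)
    have h1 : r.1 = j := by
      apply hcol ℓ
      have h3 := congrArg Prod.fst h
      simp only at h3
      rw [h2] at h3
      exact h3
    exact Prod.ext h1 h2
  · intro h; rw [h]

lemma adjV_apply (hφ : Function.Injective φ)
    (hcol : ∀ ℓ : Fin k, Function.Injective fun j => M j ℓ)
    (V : Fin m × Fin k → ZMod q) (j : Fin m) (ℓ : Fin k) :
    adjV φ M V (M j ℓ, φ ℓ) = V (j, ℓ) := by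
  have hcond : ∀ r : Fin m × Fin k,
      ((M r.1 r.2, φ r.2) = (M j ℓ, φ ℓ)) = (r = (j, ℓ)) :=
    fun r => propext (e_eq_iff hφ hcol)
  simp only [adjV, hcond]
  simp

lemma adjV_eq_zero (V : Fin m × Fin k → ZMod q) (p : Fin n × Fin k')
    (hp : ∀ r : Fin m × Fin k, (M r.1 r.2, φ r.2) ≠ p) :
    adjV φ M V p = 0 :=
  Finset.sum_eq_zero fun r _ => if_neg (hp r)

lemma adjV_zero : adjV φ M (0 : Fin m × Fin k → ZMod q) = 0 := by
  funext p
  simp [adjV]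

lemma adjV_injective (hφ : Function.Injective φ)
    (hcol : ∀ ℓ : Fin k, Function.Injective fun j => M j ℓ) :
    Function.Injective (adjV (q := q) φ M) := by
  intro V W h
  funext r
  have h2 := congrFun h (M r.1 r.2, φ r.2)
  rw [adjV_apply hφ hcol, adjV_apply hφ hcol] at h2
  simpa using h2

lemma dotP_adjV (V : Fin m × Fin k → ZMod q) (X : Fin n × Fin k' → ZMod q) :
    dotP (adjV φ M V) X = dotP V (projMap φ M X) := by
  rw [dotP, dotP]
  calc ∑ p : Fin n × Fin k', adjV φ M V p * X p
      = ∑ p : Fin n × Fin k',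
          ∑ r : Fin m × Fin k, if (M r.1 r.2, φ r.2) = p then V r * X p else 0 := by
        refine Finset.sum_congr rfl fun p _ => ?_
        rw [adjV, Finset.sum_mul]
        exact Finset.sum_congr rfl fun r _ => by rw [ite_mul, zero_mul]
    _ = ∑ r : Fin m × Fin k,
          ∑ p : Fin n × Fin k', if (M r.1 r.2, φ r.2) = p then V r * X p else 0 :=
        Finset.sum_comm
    _ = ∑ r : Fin m × Fin k, V r * X (M r.1 r.2, φ r.2) := by
        refine Finset.sum_congr rfl fun r _ => ?_
        simp
    _ = ∑ r : Fin m × Fin k, V r * projMap φ M X r := rfl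

end Matrices

lemma key {m k n k' : ℕ} (φ : Fin k → Fin k') (M : Fin m → Fin k → Fin n)
    (Y : (Fin k → ZMod q) → ℝ) (D : (Fin n × Fin k' → ZMod q) → ℝ)
    (Z : Fin m × Fin k → ZMod q) :
    ((densityFn (inputDist D Y φ M) Z : ℝ) : ℂ)
      = ∑ V : Fin m × Fin k → ZMod q,
          fourierDensity D (adjV φ M V) * (∏ j, psiY Y (mrow V j))
            * (ZMod.stdAddChar (dotP V Z) : ℂ) := by
  classical
  have hprod : ∀ V : Fin m × Fin k → ZMod q,
      (∏ j, psiY Y (mrow V j))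
        = ∑ W : Fin m × Fin k → ZMod q,
            (prodRows Y W : ℂ) * (ZMod.stdAddChar (dotP V W) : ℂ) := by
    intro V
    have h1 : (∏ j, psiY Y (mrow V j))
        = ∑ g : Fin m → Fin k → ZMod q,
            ∏ j, (Y (g j) : ℂ) * (ZMod.stdAddChar (dotP (mrow V j) (g j)) : ℂ) := by
      simp only [psiY]
      exact Fintype.prod_sum _
    rw [h1, ← Equiv.sum_comp (Equiv.curry (Fin m) (Fin k) (ZMod q))
      (fun g : Fin m → Fin k → ZMod q =>
        ∏ j, (Y (g j) : ℂ) * (ZMod.stdAddChar (dotP (mrow V j) (g j)) : ℂ))]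
    refine Finset.sum_congr rfl fun W _ => ?_
    rw [Finset.prod_mul_distrib]
    congr 1
    · rw [prodRows]
      push_cast
      exact Finset.prod_congr rfl fun j _ => rfl
    · rw [← psi_sum]
      congr 1
      show (∑ j, ∑ ℓ, V (j, ℓ) * W (j, ℓ)) = dotP V W
      rw [dotP]
      exact (Fintype.sum_prod_type (fun r : Fin m × Fin k => V r * W r)).symm
  simp_rw [fourierDensity_eq, hprod]
  have hswap : ∀ V : Fin m × Fin k → ZMod q,
      (∑ X : Fin n × Fin k' → ZMod q,
          (D X : ℂ) * (ZMod.stdAddChar (dotP (adjV φ M V) X) : ℂ)⁻¹)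
        * (∑ W : Fin m × Fin k → ZMod q,
            (prodRows Y W : ℂ) * (ZMod.stdAddChar (dotP V W) : ℂ))
        * (ZMod.stdAddChar (dotP V Z) : ℂ)
      = ∑ X : Fin n × Fin k' → ZMod q, ∑ W : Fin m × Fin k → ZMod q,
          (D X : ℂ) * (prodRows Y W : ℂ)
            * (ZMod.stdAddChar (dotP V (W + Z - projMap φ M X)) : ℂ) := by
    intro V
    rw [Finset.sum_mul_sum, Finset.sum_mul]
    refine Finset.sum_congr rfl fun X _ => ?_
    rw [Finset.sum_mul]
    refine Finset.sum_congr rfl fun W _ => ?_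
    have hlin : dotP V (W + Z - projMap φ M X)
        = dotP V W + dotP V Z - dotP V (projMap φ M X) := by
      simp [dotP, mul_add, mul_sub, Finset.sum_add_distrib, Finset.sum_sub_distrib]
    rw [hlin, sub_eq_add_neg, AddChar.map_add_eq_mul, AddChar.map_add_eq_mul,
      AddChar.map_neg_eq_inv, ← dotP_adjV]
    ring
  simp_rw [hswap]
  rw [Finset.sum_comm]
  have hX : ∀ X : Fin n × Fin k' → ZMod q,
      (∑ V : Fin m × Fin k → ZMod q, ∑ W : Fin m × Fin k → ZMod q,
          (D X : ℂ) * (prodRows Y W : ℂ)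
            * (ZMod.stdAddChar (dotP V (W + Z - projMap φ M X)) : ℂ))
      = (D X : ℂ) * (prodRows Y (projMap φ M X - Z) : ℂ)
          * ((Fintype.card (Fin m × Fin k → ZMod q) : ℕ) : ℂ) := by
    intro X
    rw [Finset.sum_comm]
    have hW : ∀ W : Fin m × Fin k → ZMod q,
        (∑ V : Fin m × Fin k → ZMod q,
            (D X : ℂ) * (prodRows Y W : ℂ)
              * (ZMod.stdAddChar (dotP V (W + Z - projMap φ M X)) : ℂ))
        = if W = projMap φ M X - Z then
            (D X : ℂ) * (prodRows Y W : ℂ)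
              * ((Fintype.card (Fin m × Fin k → ZMod q) : ℕ) : ℂ)
          else 0 := by
      intro W
      rw [← Finset.mul_sum, sum_psi_dot]
      have hcond : (W + Z - projMap φ M X = 0) ↔ (W = projMap φ M X - Z) := by
        rw [sub_eq_zero, eq_sub_iff_add_eq]
      rw [if_congr hcond rfl rfl, mul_ite, mul_zero]
    simp_rw [hW]
    rw [Finset.sum_ite_eq' univ (projMap φ M X - Z)
      (fun W => (D X : ℂ) * (prodRows Y W : ℂ)
        * ((Fintype.card (Fin m × Fin k → ZMod q) : ℕ) : ℂ)), if_pos (Finset.mem_univ _)]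
  simp_rw [hX]
  rw [densityFn, inputDist]
  push_cast
  rw [Finset.mul_sum]
  refine Finset.sum_congr rfl fun X _ => ?_
  ring

end SF5Aux
/-- The sup-distance of the density of `Input(D,M)` from `1` is at most
the Fourier 1-mass of `μ_D` on nonzero frequencies supported in `φ(supp(M))` meeting no
hyperedge in exactly one vertex. -/
theorem input_density_close_to_uniform
    (q : ℕ) [NeZero q] (hq : 2 ≤ q) (m k n k' : ℕ) (hkk' : k ≤ k')
    (φ : Fin k → Fin k') (hφ : Function.Injective φ)
    (M : Fin m → Fin k → Fin n) (hM : M ∈ PHMset m k n)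
    (Y : (Fin k → ZMod q) → ℝ) (hY : IsDist Y) (hY1 : OneWise Y)
    (D : (Fin n × Fin k' → ZMod q) → ℝ) (hD : IsDist D) :
    ∀ Z : Fin m × Fin k → ZMod q,
      |densityFn (inputDist D Y φ M) Z - 1|
        ≤ ∑ U ∈ (univ : Finset (Fin n × Fin k' → ZMod q)).filter
            (fun U => U ≠ 0 ∧ suppF U ⊆ univ.biUnion (edgePhi φ M) ∧
              ∀ j : Fin m, (suppF U ∩ edgePhi φ M j).card ≠ 1),
          ‖fourierDensity D U‖ := by


  classical
  intro Z
  have hcol : ∀ ℓ : Fin k, Function.Injective fun j => M j ℓ :=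
    (Finset.mem_filter.mp hM).2
  set F : (Fin m × Fin k → ZMod q) → ℂ := fun V =>
    fourierDensity D (SF5Aux.adjV φ M V) * (∏ j, SF5Aux.psiY Y (mrow V j))
      * (ZMod.stdAddChar (SF5Aux.dotP V Z) : ℂ) with hF
  -- the V = 0 term equals 1
  have hpsirow : ∀ j : Fin m, SF5Aux.psiY Y (mrow (0 : Fin m × Fin k → ZMod q) j) = 1 := by
    intro j
    have : mrow (0 : Fin m × Fin k → ZMod q) j = (0 : Fin k → ZMod q) := rfl
    rw [this, SF5Aux.psiY_zero Y hY]
  have hF0 : F 0 = 1 := by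
    rw [hF]
    simp only [SF5Aux.adjV_zero]
    rw [SF5Aux.fourierDensity_eq]
    have hd0 : ∀ X : Fin n × Fin k' → ZMod q,
        SF5Aux.dotP (0 : Fin n × Fin k' → ZMod q) X = 0 := by
      intro X; simp [SF5Aux.dotP]
    have hdz : SF5Aux.dotP (0 : Fin m × Fin k → ZMod q) Z = 0 := by
      simp [SF5Aux.dotP]
    simp only [hd0, hdz, AddChar.map_zero_eq_one, inv_one, mul_one, hpsirow,
      Finset.prod_const_one]
    exact_mod_cast hD.2
  have hkey := SF5Aux.key φ M Y D Z
  have hsplit : ((densityFn (inputDist D Y φ M) Z : ℝ) : ℂ) - 1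
      = ∑ V ∈ (univ : Finset (Fin m × Fin k → ZMod q)).erase 0, F V := by
    rw [hkey, ← Finset.add_sum_erase univ F (Finset.mem_univ 0), hF0]
    ring
  have habs : |densityFn (inputDist D Y φ M) Z - 1|
      = ‖((densityFn (inputDist D Y φ M) Z : ℝ) : ℂ) - 1‖ := by
    rw [← Real.norm_eq_abs, ← Complex.norm_real]
    norm_cast
  rw [habs, hsplit]
  -- bound the sum termwise
  have hstep1 : ‖∑ V ∈ (univ : Finset (Fin m × Fin k → ZMod q)).erase 0, F V‖
      ≤ ∑ V ∈ (univ : Finset (Fin m × Fin k → ZMod q)).erase 0,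
          (if SingletonFree V then ‖fourierDensity D (SF5Aux.adjV φ M V)‖ else 0) := by
    refine le_trans (norm_sum_le _ _) (Finset.sum_le_sum fun V _ => ?_)
    by_cases hsf : SingletonFree V
    · rw [if_pos hsf, hF]
      simp only [norm_mul, SF5Aux.psi_abs, mul_one]
      have hle : ‖∏ j, SF5Aux.psiY Y (mrow V j)‖ ≤ 1 := by
        rw [norm_prod]
        exact Finset.prod_le_one (fun j _ => norm_nonneg _)
          (fun j _ => SF5Aux.psiY_abs_le Y hY _)
      exact mul_le_of_le_one_right (norm_nonneg _) hle
    · rw [if_neg hsf]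
      rw [SingletonFree] at hsf
      push_neg at hsf
      obtain ⟨j, hj⟩ := hsf
      have hz : SF5Aux.psiY Y (mrow V j) = 0 := by
        refine SF5Aux.psiY_singleton Y hY1 _ ?_
        convert hj using 2
        ext ℓ
        rw [Finset.mem_filter, Finset.mem_filter]
        exact Iff.rfl
      have : F V = 0 := by
        rw [hF]
        simp only
        rw [Finset.prod_eq_zero (Finset.mem_univ j) hz, mul_zero, zero_mul]
      rw [this, norm_zero]
  refine le_trans hstep1 ?_
  rw [← Finset.sum_filter]
  have hset : ((univ : Finset (Fin m × Fin k → ZMod q)).erase 0).filter SingletonFree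
      = univ.filter (fun V => V ≠ 0 ∧ SingletonFree V) := by
    ext V
    simp [Finset.mem_erase, and_comm]
  rw [hset]
  have himg : (∑ V ∈ univ.filter (fun V : Fin m × Fin k → ZMod q => V ≠ 0 ∧ SingletonFree V),
        ‖fourierDensity D (SF5Aux.adjV φ M V)‖)
      = ∑ U ∈ (univ.filter (fun V : Fin m × Fin k → ZMod q =>
            V ≠ 0 ∧ SingletonFree V)).image (SF5Aux.adjV φ M),
          ‖fourierDensity D U‖ :=
    (Finset.sum_image (g := SF5Aux.adjV φ M) (f := fun U => ‖fourierDensity D U‖)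
      (fun V _ W _ h => SF5Aux.adjV_injective hφ hcol h)).symm
  rw [himg]
  refine Finset.sum_le_sum_of_subset_of_nonneg ?_
    (fun _ _ _ => norm_nonneg _)
  intro U hU
  rw [Finset.mem_image] at hU
  obtain ⟨V, hV, rfl⟩ := hU
  rw [Finset.mem_filter] at hV
  obtain ⟨-, hVne, hVsf⟩ := hV
  refine Finset.mem_filter.mpr ⟨Finset.mem_univ _, ?_, ?_, ?_⟩
  · -- nonzero
    intro h0
    exact hVne (SF5Aux.adjV_injective hφ hcol (h0.trans SF5Aux.adjV_zero.symm))
  · -- support containment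
    intro p hp
    rw [suppF, Finset.mem_filter] at hp
    have hpne := hp.2
    by_cases hex : ∃ r : Fin m × Fin k, (M r.1 r.2, φ r.2) = p
    · obtain ⟨r, hr⟩ := hex
      refine Finset.mem_biUnion.mpr ⟨r.1, Finset.mem_univ _, ?_⟩
      rw [edgePhi, Finset.mem_image]
      exact ⟨r.2, Finset.mem_univ _, hr⟩
    · push_neg at hex
      exact absurd (SF5Aux.adjV_eq_zero V p hex) hpne
  · -- intersection cardinalities
    intro j
    have hseteq : suppF (SF5Aux.adjV φ M V) ∩ edgePhi φ M j
        = (univ.filter fun ℓ => V (j, ℓ) ≠ 0).image (fun ℓ => (M j ℓ, φ ℓ)) := by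
      ext p
      simp only [Finset.mem_inter, suppF, Finset.mem_filter, Finset.mem_univ, true_and,
        edgePhi, Finset.mem_image]
      constructor
      · rintro ⟨hne, ℓ, rfl⟩
        refine ⟨ℓ, ?_, rfl⟩
        rwa [SF5Aux.adjV_apply hφ hcol] at hne
      · rintro ⟨ℓ, hℓ, rfl⟩
        refine ⟨?_, ℓ, rfl⟩
        rwa [SF5Aux.adjV_apply hφ hcol]
    rw [hseteq, Finset.card_image_of_injective _
      (fun ℓ₁ ℓ₂ h => hφ (congrArg Prod.snd h))]
    exact hVsf j

end
end

section
/- For every k ∈ ℕ there exist C < ∞ and α₀ > 0 such that the following holds. Let n,m ∈ ℕ with m ≤ α₀·n, let U ⊆ [n]×[k] with h := |U| satisfying 2 ≤ h ≤ k·m. Then for a uniformly random M ∈ PHM(m,k,n), Pr[ U ⊆ supp(M) and for every j ∈ [m], |U ∩ supp(M_j)| ≠ 1 ] ≤ (C·h/n)^{h/2}. -/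
open Finset

noncomputable section

attribute [local instance] Classical.propDecidable

/-- The `j`-th hyperedge of a hypermatching `M`, as a subset of `[n]×[k]`. -/
def edgeNK {m k n : ℕ} (M : Fin m → Fin k → Fin n) (j : Fin m) : Finset (Fin n × Fin k) :=
  univ.image fun ℓ => (M j ℓ, ℓ)

namespace CombAux

lemma desc_aux {n m : ℕ} (hmn : m ≤ n) : ∀ a, a ≤ m →
    n.descFactorial (m - a) * (n - m + 1) ^ a ≤ n.descFactorial m := by
  intro a
  induction a with
  | zero => simp
  | succ a ih =>
    intro ha
    have h1 : m - (a + 1) + 1 = m - a := by omega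
    calc n.descFactorial (m - (a + 1)) * (n - m + 1) ^ (a + 1)
        = (n.descFactorial (m - (a + 1)) * (n - m + 1)) * (n - m + 1) ^ a := by ring
      _ ≤ n.descFactorial (m - a) * (n - m + 1) ^ a := by
          refine Nat.mul_le_mul_right _ ?_
          rw [← h1, Nat.descFactorial_succ, Nat.mul_comm]
          exact Nat.mul_le_mul_right _ (by omega)
      _ ≤ n.descFactorial m := ih (by omega)

lemma card_colprod {m k n : ℕ} (P : Fin k → (Fin m → Fin n) → Prop)
    [DecidablePred fun M : Fin m → Fin k → Fin n => ∀ ℓ, P ℓ (fun j => M j ℓ)]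
    [∀ ℓ, DecidablePred (P ℓ)] :
    (univ.filter fun M : Fin m → Fin k → Fin n => ∀ ℓ, P ℓ (fun j => M j ℓ)).card
      = ∏ ℓ, (univ.filter (P ℓ)).card := by
  rw [← Fintype.card_subtype]
  have e : {M : Fin m → Fin k → Fin n // ∀ ℓ, P ℓ (fun j => M j ℓ)} ≃
      (∀ ℓ : Fin k, {c : Fin m → Fin n // P ℓ c}) :=
    { toFun := fun M ℓ => ⟨fun j => M.1 j ℓ, M.2 ℓ⟩
      invFun := fun c => ⟨fun j ℓ => (c ℓ).1 j, fun ℓ => (c ℓ).2⟩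
      left_inv := fun M => rfl
      right_inv := fun c => rfl }
  rw [Fintype.card_congr e, Fintype.card_pi]
  exact Finset.prod_congr rfl fun ℓ _ => Fintype.card_subtype _

lemma card_inj (m n : ℕ)
    [DecidablePred fun c : Fin m → Fin n => Function.Injective c] :
    (univ.filter fun c : Fin m → Fin n => Function.Injective c).card
      = n.descFactorial m := by
  rw [← Fintype.card_subtype,
    Fintype.card_congr (Equiv.subtypeInjectiveEquivEmbedding (Fin m) (Fin n)),
    Fintype.card_embedding_eq, Fintype.card_fin, Fintype.card_fin]

lemma card_fixed {m n : ℕ} (R : Finset (Fin m)) (val : Fin m → Fin n)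
    [DecidablePred fun c : Fin m → Fin n =>
      Function.Injective c ∧ ∀ j ∈ R, c j = val j] :
    (univ.filter fun c : Fin m → Fin n =>
        Function.Injective c ∧ ∀ j ∈ R, c j = val j).card
      ≤ n.descFactorial (m - R.card) := by
  rw [← Fintype.card_subtype]
  have hcard : Fintype.card ((↥(Rᶜ : Finset (Fin m))) ↪ Fin n)
      = n.descFactorial (m - R.card) := by
    rw [Fintype.card_embedding_eq, Fintype.card_coe, Fintype.card_fin, card_compl,
      Fintype.card_fin]
  rw [← hcard]
  refine Fintype.card_le_of_injective
    (fun c => ⟨fun x => c.1 x.1, fun x y hxy => Subtype.ext (c.2.1 hxy)⟩) ?_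
  intro c c' hcc
  apply Subtype.ext
  funext j
  by_cases hj : j ∈ R
  · rw [c.2.2 j hj, c'.2.2 j hj]
  · exact congrArg (fun (f : ↥(Rᶜ : Finset (Fin m)) ↪ Fin n) => f ⟨j, by simpa using hj⟩) hcc

lemma card_into {A B : Type*} [Fintype A] [Fintype B] (T : Finset B) :
    (univ.filter fun r : A → B => ∀ a, r a ∈ T).card = T.card ^ Fintype.card A := by
  rw [← Fintype.card_subtype,
    Fintype.card_congr (Equiv.subtypePiEquivPi (p := fun (_ : A) (b : B) => b ∈ T)),
    Fintype.card_pi]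
  simp [Fintype.card_coe]

lemma good_count {A B : Type*} [Fintype A] [Fintype B] (t₀ : ℕ)
    (good : Finset (A → B))
    (hgood : ∀ r ∈ good, ∃ T : Finset B, T.card ≤ t₀ ∧ ∀ a, r a ∈ T) :
    good.card ≤ ∑ t ∈ Finset.range (t₀ + 1),
      (Fintype.card B).choose t * t ^ (Fintype.card A) := by
  have hsub : good ⊆ (univ.powerset.filter fun T : Finset B => T.card ≤ t₀).biUnion
      (fun T => univ.filter fun r : A → B => ∀ a, r a ∈ T) := by
    intro r hr
    rw [mem_biUnion]
    obtain ⟨T, hT1, hT2⟩ := hgood r hr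
    refine ⟨T, ?_, ?_⟩
    · rw [mem_filter]
      exact ⟨mem_powerset.mpr (subset_univ _), hT1⟩
    · rw [mem_filter]
      exact ⟨mem_univ _, hT2⟩
  calc good.card ≤ _ := card_le_card hsub
    _ ≤ ∑ T ∈ univ.powerset.filter (fun T : Finset B => T.card ≤ t₀),
          (univ.filter fun r : A → B => ∀ a, r a ∈ T).card := card_biUnion_le
    _ = ∑ T ∈ univ.powerset.filter (fun T : Finset B => T.card ≤ t₀),
          T.card ^ Fintype.card A := sum_congr rfl fun T _ => card_into T
    _ = ∑ t ∈ Finset.range (t₀ + 1), ∑ T ∈ powersetCard t (univ : Finset B),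
          T.card ^ Fintype.card A := by
        rw [← sum_biUnion]
        · apply sum_congr _ fun _ _ => rfl
          ext T
          simp only [mem_biUnion, mem_filter, mem_powerset, mem_range, Nat.lt_succ_iff,
            mem_powersetCard_univ]
          constructor
          · rintro ⟨-, hT⟩; exact ⟨T.card, hT, rfl⟩
          · rintro ⟨t, ht, rfl⟩; exact ⟨subset_univ _, ht⟩
        · intro s _ t _ hst
          simp only [Function.onFun]
          rw [disjoint_left]
          intro T hT hT'
          rw [mem_powersetCard_univ] at hT hT'
          exact hst (hT ▸ hT')
    _ = ∑ t ∈ Finset.range (t₀ + 1), (Fintype.card B).choose t * t ^ (Fintype.card A) := by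
        refine sum_congr rfl fun t _ => ?_
        rw [sum_congr rfl (fun T hT => by rw [mem_powersetCard_univ.mp hT]),
          sum_const, card_powersetCard, card_univ, smul_eq_mul]

lemma pow_self_le (t : ℕ) : (t : ℝ) ^ t ≤ Real.exp 1 ^ t * (t.factorial : ℝ) := by
  induction t with
  | zero => simp
  | succ t ih =>
    have e1 : (1 : ℝ) ≤ Real.exp 1 := by
      have := Real.add_one_le_exp (1 : ℝ); linarith
    rcases Nat.eq_zero_or_pos t with rfl | ht
    · simpa using e1
    · have htR : (0 : ℝ) < t := by exact_mod_cast ht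
      have key : ((t : ℝ) + 1) ^ t ≤ Real.exp 1 * (t : ℝ) ^ t := by
        have h1 : ((t : ℝ) + 1) = (t : ℝ) * (1 + 1 / t) := by field_simp
        have h2 : (1 + 1 / (t : ℝ)) ≤ Real.exp (1 / t) := by
          have := Real.add_one_le_exp (1 / (t : ℝ)); linarith
        calc ((t : ℝ) + 1) ^ t = (t : ℝ) ^ t * (1 + 1 / t) ^ t := by rw [h1, mul_pow]
          _ ≤ (t : ℝ) ^ t * Real.exp (1 / t) ^ t := by
              gcongr
          _ = (t : ℝ) ^ t * Real.exp (t * (1 / t)) := by rw [Real.exp_nat_mul]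
          _ = Real.exp 1 * (t : ℝ) ^ t := by
              rw [mul_one_div, div_self (ne_of_gt htR), mul_comm]
      have hnn : (0 : ℝ) ≤ (t : ℝ) + 1 := by positivity
      calc ((t + 1 : ℕ) : ℝ) ^ (t + 1) = ((t : ℝ) + 1) * ((t : ℝ) + 1) ^ t := by
            push_cast; ring
        _ ≤ ((t : ℝ) + 1) * (Real.exp 1 * (t : ℝ) ^ t) := by gcongr
        _ ≤ ((t : ℝ) + 1) * (Real.exp 1 * (Real.exp 1 ^ t * (t.factorial : ℝ))) := by
            have h3 : (t : ℝ) ^ t ≤ Real.exp 1 ^ t * (t.factorial : ℝ) := ih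
            gcongr
        _ = Real.exp 1 ^ (t + 1) * (((t : ℝ) + 1) * (t.factorial : ℝ)) := by ring
        _ = Real.exp 1 ^ (t + 1) * ((t + 1).factorial : ℝ) := by
            rw [Nat.factorial_succ]; push_cast; ring

lemma sq_rpow (x : ℝ) (hx : 0 ≤ x) (h : ℕ) : x ^ h = (x ^ 2) ^ ((h : ℝ) / 2) := by
  have h2 : ((h : ℝ)) = 2 * ((h : ℝ) / 2) := by ring
  rw [← Real.rpow_natCast x h]
  nth_rewrite 1 [h2]
  rw [Real.rpow_mul hx, Real.rpow_two]

lemma term_bound {m h t t₀ : ℕ} (hh : 2 ≤ h) (ht : t ≤ t₀) (ht₀ : (t₀ : ℝ) ≤ (h : ℝ) / 2) :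
    (m.choose t : ℝ) * (t : ℝ) ^ h
      ≤ (Real.exp 1 * m * ((h : ℝ) / 2)) ^ ((h : ℝ) / 2) := by
  have hB : (0 : ℝ) ≤ Real.exp 1 * m * ((h : ℝ) / 2) := by positivity
  rcases Nat.eq_zero_or_pos t with rfl | htpos
  · simp only [Nat.cast_zero]
    rw [zero_pow (by omega : h ≠ 0), mul_zero]
    exact Real.rpow_nonneg hB _
  rcases le_or_gt t m with htm | htm
  swap
  · rw [Nat.choose_eq_zero_of_lt htm]
    simpa using Real.rpow_nonneg hB _
  have htR : (0 : ℝ) < t := by exact_mod_cast htpos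
  have hmR : (0 : ℝ) < m := lt_of_lt_of_le htR (by exact_mod_cast htm)
  have e1 : (1 : ℝ) ≤ Real.exp 1 := by have := Real.add_one_le_exp (1 : ℝ); linarith
  have hth2 : (t : ℝ) ≤ (h : ℝ) / 2 := le_trans (by exact_mod_cast ht) ht₀
  set x : ℝ := Real.exp 1 * m / t with hxdef
  have hx0 : 0 < x := by positivity
  have hx1 : 1 ≤ x := by
    rw [hxdef, le_div_iff₀ htR, one_mul]
    have htmR : (t : ℝ) ≤ m := by exact_mod_cast htm
    nlinarith
  have hchoose : (m.choose t : ℝ) ≤ x ^ t := by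
    have hxt : x ^ t = (m : ℝ) ^ t * Real.exp 1 ^ t / (t : ℝ) ^ t := by
      rw [hxdef, div_pow, mul_pow]; ring
    rw [hxt, le_div_iff₀ (by positivity)]
    have h1 : (m.choose t : ℝ) * (t.factorial : ℝ) ≤ (m : ℝ) ^ t := by
      have h2 := Nat.descFactorial_le_pow m t
      rw [Nat.descFactorial_eq_factorial_mul_choose] at h2
      calc (m.choose t : ℝ) * (t.factorial : ℝ) = ((t.factorial * m.choose t : ℕ) : ℝ) := by
            push_cast; ring
        _ ≤ ((m ^ t : ℕ) : ℝ) := by exact_mod_cast h2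
        _ = (m : ℝ) ^ t := by push_cast; rfl
    calc (m.choose t : ℝ) * (t : ℝ) ^ t
        ≤ (m.choose t : ℝ) * (Real.exp 1 ^ t * (t.factorial : ℝ)) := by
          have := pow_self_le t
          gcongr
        _ = ((m.choose t : ℝ) * (t.factorial : ℝ)) * Real.exp 1 ^ t := by ring
        _ ≤ (m : ℝ) ^ t * Real.exp 1 ^ t := by
          have hfp : (0 : ℝ) < Real.exp 1 ^ t := by positivity
          exact mul_le_mul_of_nonneg_right h1 hfp.le
  have hxth : x ^ t ≤ x ^ ((h : ℝ) / 2) := by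
    rw [← Real.rpow_natCast x t]
    exact Real.rpow_le_rpow_of_exponent_le hx1 hth2
  calc (m.choose t : ℝ) * (t : ℝ) ^ h ≤ x ^ ((h : ℝ) / 2) * (t : ℝ) ^ h := by
        have h0 : (0 : ℝ) ≤ (t : ℝ) ^ h := by positivity
        exact mul_le_mul_of_nonneg_right (le_trans hchoose hxth) h0
    _ = x ^ ((h : ℝ) / 2) * ((t : ℝ) ^ 2) ^ ((h : ℝ) / 2) := by rw [← sq_rpow _ htR.le]
    _ = (x * (t : ℝ) ^ 2) ^ ((h : ℝ) / 2) := (Real.mul_rpow hx0.le (by positivity)).symm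
    _ ≤ (Real.exp 1 * m * ((h : ℝ) / 2)) ^ ((h : ℝ) / 2) := by
        apply Real.rpow_le_rpow (by positivity) ?_ (by positivity)
        have hxx : x * (t : ℝ) ^ 2 = Real.exp 1 * m * t := by
          rw [hxdef]; field_simp
        rw [hxx]
        have : (0 : ℝ) ≤ Real.exp 1 * m := by positivity
        exact mul_le_mul_of_nonneg_left hth2 this

lemma PHM_card (m k n : ℕ) : (PHMset m k n).card = (n.descFactorial m) ^ k := by
  rw [PHMset]
  exact (card_colprod (fun (_ : Fin k) (c : Fin m → Fin n) => Function.Injective c)).trans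
    (by simp only [card_inj, prod_const, card_univ, Fintype.card_fin])

end CombAux

open CombAux in
/-- For a fixed set `U` of `h` vertices with `2 ≤ h ≤ km`, the
probability that a random hypermatching covers `U` while no hyperedge meets `U` in
exactly one vertex is at most `(Ch/n)^{h/2}`. -/
theorem combinatorial_bound
    (k : ℕ) :
    ∃ C : ℝ, ∃ α₀ : ℝ, 0 < α₀ ∧
      ∀ n m : ℕ, (m : ℝ) ≤ α₀ * n →
      ∀ U : Finset (Fin n × Fin k), 2 ≤ U.card → U.card ≤ k * m →
        ((((PHMset m k n).filter fun M =>
            U ⊆ univ.biUnion (edgeNK M) ∧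
              ∀ j : Fin m, (U ∩ edgeNK M j).card ≠ 1).card : ℝ))
          ≤ (C * U.card / n) ^ ((U.card : ℝ) / 2) * ((PHMset m k n).card : ℝ) := by
  refine ⟨12, 1/2, by norm_num, ?_⟩
  intro n m hmn U hU2 hUkm
  set h := U.card with hh
  -- basic numeric facts
  have hm1 : 1 ≤ m := by
    rcases Nat.eq_zero_or_pos m with rfl | hp
    · omega
    · exact hp
  have h2mn : 2 * m ≤ n := by
    have : ((2 * m : ℕ) : ℝ) ≤ (n : ℝ) := by push_cast; linarith
    exact_mod_cast this
  have hmn' : m ≤ n := by omega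
  have hn2 : 2 ≤ n := by omega
  set t₀ := h / 2 with ht₀def
  -- the families
  set F : (↥U → Fin m) → Finset (Fin m → Fin k → Fin n) := fun r =>
    (PHMset m k n).filter fun M => ∀ u : ↥U, M (r u) u.1.2 = u.1.1 with hF
  set goodR : Finset (↥U → Fin m) :=
    univ.filter fun r => ∀ j : Fin m, (univ.filter fun u : ↥U => r u = j).card ≠ 1 with hgoodR
  -- Step 1 : the event is covered by the F r for good r
  have step1 : ((PHMset m k n).filter fun M =>
      U ⊆ univ.biUnion (edgeNK M) ∧ ∀ j : Fin m, (U ∩ edgeNK M j).card ≠ 1)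
        ⊆ goodR.biUnion F := by
    intro M hM
    rw [mem_filter] at hM
    obtain ⟨hMP, cover, sf⟩ := hM
    have Minj : ∀ ℓ : Fin k, Function.Injective fun j => M j ℓ :=
      (mem_filter.mp hMP).2
    have hex : ∀ u : ↥U, ∃ j, u.1 ∈ edgeNK M j := by
      intro u
      have h1 := cover u.2
      rw [mem_biUnion] at h1
      obtain ⟨j, -, hj⟩ := h1
      exact ⟨j, hj⟩
    have edge_val : ∀ (x : Fin n × Fin k) (j : Fin m), x ∈ edgeNK M j → M j x.2 = x.1 := by
      intro x j hx
      rw [edgeNK, mem_image] at hx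
      obtain ⟨ℓ, -, hℓ⟩ := hx
      rw [← hℓ]
    have edge_unique : ∀ (x : Fin n × Fin k) (j j' : Fin m),
        x ∈ edgeNK M j → x ∈ edgeNK M j' → j = j' := by
      intro x j j' h1 h2
      apply Minj x.2
      show M j x.2 = M j' x.2
      rw [edge_val _ _ h1, edge_val _ _ h2]
    set r : ↥U → Fin m := fun u => (hex u).choose with hr
    have hrs : ∀ u : ↥U, u.1 ∈ edgeNK M (r u) := fun u => (hex u).choose_spec
    rw [mem_biUnion]
    refine ⟨r, ?_, ?_⟩
    · rw [hgoodR, mem_filter]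
      refine ⟨mem_univ _, fun j => ?_⟩
      have hcb : (univ.filter fun u : ↥U => r u = j).card = (U ∩ edgeNK M j).card := by
        apply card_bij (fun (u : ↥U) _ => u.1)
        · intro u hu
          rw [mem_filter] at hu
          rw [mem_inter]
          exact ⟨u.2, hu.2 ▸ hrs u⟩
        · intro u _ u' _ he
          exact Subtype.ext he
        · intro x hx
          rw [mem_inter] at hx
          refine ⟨⟨x, hx.1⟩, ?_, rfl⟩
          rw [mem_filter]
          exact ⟨mem_univ _, edge_unique x _ _ (hrs ⟨x, hx.1⟩) hx.2⟩
      rw [hcb]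
      exact sf j
    · rw [hF, mem_filter]
      exact ⟨hMP, fun u => edge_val u.1 (r u) (hrs u)⟩
  -- Step 2 : counting matchings compatible with one assignment
  have step2 : ∀ r : ↥U → Fin m,
      (F r).card * (n - m + 1) ^ h ≤ (PHMset m k n).card := by
    intro r
    set hcol : Fin k → ℕ := fun ℓ => (univ.filter fun u : ↥U => u.1.2 = ℓ).card with hhcol
    set cnt : Fin k → ℕ := fun ℓ => (univ.filter fun c : Fin m → Fin n =>
        Function.Injective c ∧ ∀ u : ↥U, u.1.2 = ℓ → c (r u) = u.1.1).card with hcnt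
    have hcols : (F r).card = ∏ ℓ, cnt ℓ := by
      have e1 : F r = univ.filter (fun M : Fin m → Fin k → Fin n => ∀ ℓ : Fin k,
          Function.Injective (fun j => M j ℓ) ∧
            ∀ u : ↥U, u.1.2 = ℓ → M (r u) ℓ = u.1.1) := by
        rw [hF]
        show ((univ.filter _).filter _) = _
        rw [filter_filter]
        apply filter_congr
        intro M _
        constructor
        · rintro ⟨hinj, hval⟩ ℓ
          exact ⟨hinj ℓ, fun u hu => by rw [← hu]; exact hval u⟩
        · intro H
          exact ⟨fun ℓ => (H ℓ).1, fun u => (H u.1.2).2 u rfl⟩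
      rw [e1]
      exact card_colprod (fun ℓ c => Function.Injective c ∧
        ∀ u : ↥U, u.1.2 = ℓ → c (r u) = u.1.1)
    have hsum : ∑ ℓ, hcol ℓ = h := by
      rw [hhcol]
      rw [← Finset.card_eq_sum_card_fiberwise
        (f := fun u : ↥U => u.1.2) (s := univ) (t := univ) (fun u _ => mem_univ _)]
      rw [card_univ, Fintype.card_coe]
    have hbound : ∀ ℓ, cnt ℓ * (n - m + 1) ^ hcol ℓ ≤ n.descFactorial m := by
      intro ℓ
      by_cases hinj : ∀ u u' : ↥U, u.1.2 = ℓ → u'.1.2 = ℓ → r u = r u' → u = u'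
      · -- injective case
        set R : Finset (Fin m) := (univ.filter fun u : ↥U => u.1.2 = ℓ).image r with hR
        have hRcard : R.card = hcol ℓ := by
          rw [hR, hhcol]
          apply card_image_of_injOn
          intro u hu u' hu' he
          rw [mem_coe, mem_filter] at hu hu'
          exact hinj u u' hu.2 hu'.2 he
        have hcolm : hcol ℓ ≤ m := by
          rw [← hRcard]
          calc R.card ≤ (univ : Finset (Fin m)).card := card_le_card (subset_univ _)
            _ = m := by rw [card_univ, Fintype.card_fin]
        have z : Fin n := ⟨0, by omega⟩
        set val : Fin m → Fin n := fun j =>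
          if hj : ∃ u : ↥U, u.1.2 = ℓ ∧ r u = j then hj.choose.1.1 else z with hval
        have hsubf : (univ.filter fun c : Fin m → Fin n =>
            Function.Injective c ∧ ∀ u : ↥U, u.1.2 = ℓ → c (r u) = u.1.1)
            ⊆ univ.filter fun c : Fin m → Fin n =>
              Function.Injective c ∧ ∀ j ∈ R, c j = val j := by
          intro c hc
          rw [mem_filter] at hc ⊢
          obtain ⟨-, hcinj, hcval⟩ := hc
          refine ⟨mem_univ _, hcinj, fun j hj => ?_⟩
          rw [hR, mem_image] at hj
          obtain ⟨u, hu, hru⟩ := hj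
          rw [mem_filter] at hu
          have hjex : ∃ u : ↥U, u.1.2 = ℓ ∧ r u = j := ⟨u, hu.2, hru⟩
          have hspec := hjex.choose_spec
          have hcj : c j = hjex.choose.1.1 := by
            have hstep := hcval hjex.choose hspec.1
            rw [hspec.2] at hstep
            exact hstep
          have hvj : val j = hjex.choose.1.1 := by
            simp only [hval]
            rw [dif_pos hjex]
          rw [hcj, hvj]
        have h1 : cnt ℓ ≤ n.descFactorial (m - hcol ℓ) := by
          rw [hcnt, ← hRcard]
          exact le_trans (card_le_card hsubf) (card_fixed R val)
        calc cnt ℓ * (n - m + 1) ^ hcol ℓ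
            ≤ n.descFactorial (m - hcol ℓ) * (n - m + 1) ^ hcol ℓ :=
              Nat.mul_le_mul_right _ h1
          _ ≤ n.descFactorial m := desc_aux hmn' _ hcolm
      · -- non injective : empty
        push_neg at hinj
        obtain ⟨u, u', hu, hu', hru, hne⟩ := hinj
        have : cnt ℓ = 0 := by
          rw [hcnt, card_eq_zero, eq_empty_iff_forall_notMem]
          intro c hc
          rw [mem_filter] at hc
          obtain ⟨-, -, hcval⟩ := hc
          apply hne
          apply Subtype.ext
          apply Prod.ext
          · rw [← hcval u hu, ← hcval u' hu', hru]
          · rw [hu, hu']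
        rw [this, Nat.zero_mul]
        exact Nat.zero_le _
    calc (F r).card * (n - m + 1) ^ h
        = ∏ ℓ, (cnt ℓ * (n - m + 1) ^ hcol ℓ) := by
          rw [hcols, ← hsum, prod_mul_distrib, prod_pow_eq_pow_sum]
      _ ≤ ∏ _ℓ : Fin k, n.descFactorial m := prod_le_prod' fun ℓ _ => hbound ℓ
      _ = (n.descFactorial m) ^ k := by rw [prod_const, card_univ, Fintype.card_fin]
      _ = (PHMset m k n).card := (PHM_card m k n).symm
  -- Step 3 : nat inequality
  have step3 : ((PHMset m k n).filter fun M =>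
      U ⊆ univ.biUnion (edgeNK M) ∧ ∀ j : Fin m, (U ∩ edgeNK M j).card ≠ 1).card
        * (n - m + 1) ^ h ≤ goodR.card * (PHMset m k n).card := by
    calc _ ≤ (goodR.biUnion F).card * (n - m + 1) ^ h :=
          Nat.mul_le_mul_right _ (card_le_card step1)
      _ ≤ (∑ r ∈ goodR, (F r).card) * (n - m + 1) ^ h :=
          Nat.mul_le_mul_right _ card_biUnion_le
      _ = ∑ r ∈ goodR, (F r).card * (n - m + 1) ^ h := by rw [sum_mul]
      _ ≤ ∑ _r ∈ goodR, (PHMset m k n).card := sum_le_sum fun r _ => step2 r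
      _ = goodR.card * (PHMset m k n).card := by rw [sum_const, smul_eq_mul]
  -- Step 4 : counting good assignments
  have himg : ∀ r ∈ goodR, ((univ : Finset ↥U).image r).card ≤ t₀ := by
    intro r hr
    rw [hgoodR, mem_filter] at hr
    have hfib := hr.2
    have hkey : h = ∑ j ∈ univ.image r, (univ.filter fun u : ↥U => r u = j).card := by
      rw [← Finset.card_eq_sum_card_fiberwise
        (f := r) (s := univ) (t := univ.image r)
        (fun u _ => mem_image_of_mem r (mem_univ u))]
      rw [card_univ, Fintype.card_coe]
    have h2f : ∀ j ∈ univ.image r, 2 ≤ (univ.filter fun u : ↥U => r u = j).card := by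
      intro j hj
      have hne : (univ.filter fun u : ↥U => r u = j).Nonempty := by
        rw [mem_image] at hj
        obtain ⟨u, -, hu⟩ := hj
        exact ⟨u, mem_filter.mpr ⟨mem_univ _, hu⟩⟩
      have h1 := card_pos.mpr hne
      have h2 := hfib j
      omega
    have hmain : 2 * (univ.image r).card ≤ h := by
      rw [hkey]
      calc 2 * (univ.image r).card = ∑ _j ∈ univ.image r, 2 := by
            rw [sum_const, smul_eq_mul, mul_comm]
        _ ≤ _ := sum_le_sum h2f
    omega
  have step4 : goodR.card ≤ ∑ t ∈ Finset.range (t₀ + 1), m.choose t * t ^ h := by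
    have := good_count t₀ goodR (fun r hr =>
      ⟨univ.image r, himg r hr, fun a => mem_image_of_mem r (mem_univ a)⟩)
    simpa [Fintype.card_fin, Fintype.card_coe] using this
  -- Step 5 : real bound on goodR.card
  have ht₀R : (t₀ : ℝ) ≤ (h : ℝ) / 2 := by
    rw [ht₀def]
    exact_mod_cast Nat.cast_div_le
  have hGreal : (goodR.card : ℝ) ≤ (Real.exp 1 * m * h) ^ ((h : ℝ) / 2) := by
    have hB : (0 : ℝ) ≤ (Real.exp 1 * m * ((h : ℝ) / 2)) ^ ((h : ℝ) / 2) :=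
      Real.rpow_nonneg (by positivity) _
    calc (goodR.card : ℝ) ≤ ((∑ t ∈ Finset.range (t₀ + 1), m.choose t * t ^ h : ℕ) : ℝ) := by
          exact_mod_cast step4
      _ = ∑ t ∈ Finset.range (t₀ + 1), (m.choose t : ℝ) * (t : ℝ) ^ h := by push_cast; rfl
      _ ≤ ∑ _t ∈ Finset.range (t₀ + 1),
            (Real.exp 1 * m * ((h : ℝ) / 2)) ^ ((h : ℝ) / 2) := by
          refine sum_le_sum fun t htm => ?_
          exact term_bound hU2 (Nat.lt_succ_iff.mp (mem_range.mp htm)) ht₀R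
      _ = ((t₀ : ℝ) + 1) * (Real.exp 1 * m * ((h : ℝ) / 2)) ^ ((h : ℝ) / 2) := by
          rw [sum_const, card_range, nsmul_eq_mul]; push_cast; ring
      _ ≤ (2 : ℝ) ^ ((h : ℝ) / 2) * (Real.exp 1 * m * ((h : ℝ) / 2)) ^ ((h : ℝ) / 2) := by
          refine mul_le_mul_of_nonneg_right ?_ hB
          have hlt := Nat.lt_two_pow_self (n := t₀)
          calc ((t₀ : ℝ) + 1) ≤ ((2 ^ t₀ : ℕ) : ℝ) := by exact_mod_cast hlt
            _ = (2 : ℝ) ^ (t₀ : ℕ) := by push_cast; rfl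
            _ = (2 : ℝ) ^ ((t₀ : ℕ) : ℝ) := (Real.rpow_natCast 2 t₀).symm
            _ ≤ (2 : ℝ) ^ ((h : ℝ) / 2) :=
              Real.rpow_le_rpow_of_exponent_le one_le_two ht₀R
      _ = (2 * (Real.exp 1 * m * ((h : ℝ) / 2))) ^ ((h : ℝ) / 2) :=
          (Real.mul_rpow (by norm_num) (by positivity)).symm
      _ = (Real.exp 1 * m * h) ^ ((h : ℝ) / 2) := by
          congr 1
          ring
  -- Step 6
  have hcastW : ((n - m + 1 : ℕ) : ℝ) = (n : ℝ) - m + 1 := by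
    push_cast [Nat.cast_sub hmn']
    ring
  have hWpos : (0 : ℝ) < ((n - m + 1 : ℕ) : ℝ) ^ h := by positivity
  have step6 : (Real.exp 1 * m * h) ^ ((h : ℝ) / 2)
      ≤ (12 * (h : ℝ) / n) ^ ((h : ℝ) / 2) * ((n - m + 1 : ℕ) : ℝ) ^ h := by
    rw [sq_rpow (((n - m + 1 : ℕ)) : ℝ) (by positivity) h,
      ← Real.mul_rpow (by positivity) (by positivity)]
    apply Real.rpow_le_rpow (by positivity) ?_ (by positivity)
    rw [hcastW]
    have hnR : (2 : ℝ) ≤ n := by exact_mod_cast hn2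
    have hmR : (m : ℝ) ≤ (n : ℝ) / 2 := by linarith
    have he3 : Real.exp 1 ≤ 3 := by
      have := Real.exp_one_lt_d9
      linarith
    have hn0 : (0 : ℝ) < n := by linarith
    have hQ : ((n : ℝ) / 2) ^ 2 ≤ ((n : ℝ) - m + 1) ^ 2 := by
      have h1 : (0 : ℝ) ≤ (n : ℝ) / 2 := by linarith
      have h2 : (n : ℝ) / 2 ≤ (n : ℝ) - m + 1 := by linarith
      exact pow_le_pow_left₀ h1 h2 2
    rw [div_mul_eq_mul_div, le_div_iff₀ hn0]
    have hm0 : (0 : ℝ) ≤ m := by positivity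
    have hh0 : (0 : ℝ) ≤ h := by positivity
    have hem : Real.exp 1 * m ≤ 3 * ((n : ℝ) / 2) :=
      mul_le_mul he3 hmR hm0 (by norm_num)
    calc Real.exp 1 * (m : ℝ) * h * n ≤ (3 * ((n : ℝ) / 2)) * h * n := by
          refine mul_le_mul_of_nonneg_right (mul_le_mul_of_nonneg_right hem hh0) hn0.le
      _ = 12 * (h : ℝ) * ((n : ℝ) / 2) ^ 2 / 2 := by ring
      _ ≤ 12 * (h : ℝ) * ((n : ℝ) / 2) ^ 2 := by
          have : (0 : ℝ) ≤ 12 * (h : ℝ) * ((n : ℝ) / 2) ^ 2 := by positivity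
          linarith
      _ ≤ 12 * (h : ℝ) * ((n : ℝ) - m + 1) ^ 2 := by
          refine mul_le_mul_of_nonneg_left hQ (by positivity)
  -- Step 7 : conclusion
  have hPnn : (0 : ℝ) ≤ ((PHMset m k n).card : ℝ) := by positivity
  have cast3 : (((PHMset m k n).filter fun M =>
      U ⊆ univ.biUnion (edgeNK M) ∧ ∀ j : Fin m, (U ∩ edgeNK M j).card ≠ 1).card : ℝ)
        * ((n - m + 1 : ℕ) : ℝ) ^ h ≤ (goodR.card : ℝ) * ((PHMset m k n).card : ℝ) := by
    have := step3
    push_cast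
    exact_mod_cast step3
  have main : (((PHMset m k n).filter fun M =>
      U ⊆ univ.biUnion (edgeNK M) ∧ ∀ j : Fin m, (U ∩ edgeNK M j).card ≠ 1).card : ℝ)
        * ((n - m + 1 : ℕ) : ℝ) ^ h
      ≤ ((12 * (h : ℝ) / n) ^ ((h : ℝ) / 2) * ((PHMset m k n).card : ℝ))
        * ((n - m + 1 : ℕ) : ℝ) ^ h := by
    calc _ ≤ (goodR.card : ℝ) * ((PHMset m k n).card : ℝ) := cast3
      _ ≤ (Real.exp 1 * m * h) ^ ((h : ℝ) / 2) * ((PHMset m k n).card : ℝ) :=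
          mul_le_mul_of_nonneg_right hGreal hPnn
      _ ≤ ((12 * (h : ℝ) / n) ^ ((h : ℝ) / 2) * ((n - m + 1 : ℕ) : ℝ) ^ h)
            * ((PHMset m k n).card : ℝ) :=
          mul_le_mul_of_nonneg_right step6 hPnn
      _ = _ := by ring
  have := le_of_mul_le_mul_right main hWpos
  calc (((PHMset m k n).filter fun M =>
      U ⊆ univ.biUnion (edgeNK M) ∧ ∀ j : Fin m, (U ∩ edgeNK M j).card ≠ 1).card : ℝ)
      ≤ (12 * (h : ℝ) / n) ^ ((h : ℝ) / 2) * ((PHMset m k n).card : ℝ) := this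
    _ = ((12 : ℝ) * U.card / n) ^ ((U.card : ℝ) / 2) * ((PHMset m k n).card : ℝ) := by
        rw [hh]


end
end

section
/- Let q ≥ 2, let n,m,k,k' ∈ ℕ with k ≤ k', let D be a probability distribution on (ZMod q)^{n×k'}, let φ : [k] → [k'] be an injection, let Y be any probability distribution on (ZMod q)^k, let M ∈ PHM(m,k,n), and let B ⊆ (ZMod q)^{m×k} satisfy p := Pr_{X∼D, Y∼Y^{⊗m}}[Π^φ_M X − Y ∈ B] > 0. Then for every X₀ ∈ (ZMod q)^{n×k'}: μ_{Post(D;M,B)}(X₀) = μ_D(X₀) · (μ_{Y^{⊗m}} * μ_B)(Π^φ_M X₀) · ν, where ν := (|B|/q^{m·k}) / p, μ_B is the density of the uniform distribution on B, and (f*g)(z) := E_{x uniform}[f(x)·g(z−x)] denotes convolution on (ZMod q)^{m×k}. -/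
open Finset

noncomputable section

attribute [local instance] Classical.propDecidable

/-- The probability of the conditioning event `Π^φ_M X − Y ∈ B` for independent
`X ∼ D` and `Y ∼ Y^{⊗m}`. -/
def pSucc {q m k n k' : ℕ} [NeZero q] (D : (Fin n × Fin k' → ZMod q) → ℝ)
    (Y : (Fin k → ZMod q) → ℝ) (φ : Fin k → Fin k') (M : Fin m → Fin k → Fin n)
    (B : Finset (Fin m × Fin k → ZMod q)) : ℝ :=
  ∑ X : Fin n × Fin k' → ZMod q, ∑ Yv : Fin m × Fin k → ZMod q,
    (if projMap φ M X - Yv ∈ B then D X * prodRows Y Yv else 0)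

/-- The posterior distribution `Post(D; M, B)`: the conditional distribution of `X ∼ D`
given `Π^φ_M X − Y ∈ B`, for `Y ∼ Y^{⊗m}` independent of `X`. -/
def postDist {q m k n k' : ℕ} [NeZero q] (D : (Fin n × Fin k' → ZMod q) → ℝ)
    (Y : (Fin k → ZMod q) → ℝ) (φ : Fin k → Fin k') (M : Fin m → Fin k → Fin n)
    (B : Finset (Fin m × Fin k → ZMod q)) : (Fin n × Fin k' → ZMod q) → ℝ :=
  fun X₀ => D X₀ *
    (∑ Yv : Fin m × Fin k → ZMod q,
      (if projMap φ M X₀ - Yv ∈ B then prodRows Y Yv else 0)) / pSucc D Y φ M B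

/-- The uniform distribution on a subset `B`. -/
def unifOn {S : Type*} [Fintype S] (B : Finset S) : S → ℝ :=
  fun x => if x ∈ B then 1 / (B.card : ℝ) else 0

/-- Convolution on a finite abelian group: `(f*g)(z) = E_x[f(x)·g(z−x)]`. -/
def convol {S : Type*} [Fintype S] [AddGroup S] (f g : S → ℝ) : S → ℝ :=
  fun z => (∑ x, f x * g (z - x)) / (Fintype.card S : ℝ)

/-- The density of the posterior distribution factors as
`μ_D(X₀)·(μ_{Y^{⊗m}} * μ_B)(Π^φ_M X₀)·ν`. -/
theorem posterior_density_formula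
    (q : ℕ) [NeZero q] (hq : 2 ≤ q) (n m k k' : ℕ) (hkk' : k ≤ k')
    (D : (Fin n × Fin k' → ZMod q) → ℝ) (hD : IsDist D)
    (φ : Fin k → Fin k') (hφ : Function.Injective φ)
    (Y : (Fin k → ZMod q) → ℝ) (hY : IsDist Y)
    (M : Fin m → Fin k → Fin n) (hM : M ∈ PHMset m k n)
    (B : Finset (Fin m × Fin k → ZMod q))
    (hp : 0 < pSucc D Y φ M B) :
    ∀ X₀ : Fin n × Fin k' → ZMod q,
      densityFn (postDist D Y φ M B) X₀
        = densityFn D X₀ *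
            convol (densityFn (prodRows Y)) (densityFn (unifOn B)) (projMap φ M X₀) *
            (((B.card : ℝ) / (q : ℝ) ^ (m * k)) / pSucc D Y φ M B) := by
  intro X₀
  have hBne : B.Nonempty := by
    by_contra h
    rw [Finset.not_nonempty_iff_eq_empty] at h
    subst h
    simp [pSucc] at hp
  have hBcard : (0:ℝ) < (B.card : ℝ) := by exact_mod_cast Finset.card_pos.mpr hBne
  have hp' : pSucc D Y φ M B ≠ 0 := ne_of_gt hp
  have hq0 : (0:ℝ) < (q:ℝ) := by
    have := NeZero.pos q
    exact_mod_cast this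
  have hN : (Fintype.card (Fin m × Fin k → ZMod q) : ℝ) = (q:ℝ)^(m*k) := by
    simp [Fintype.card_fun, ZMod.card]
  set z := projMap φ M X₀ with hz
  set N : ℝ := (q:ℝ)^(m*k) with hNdef
  have hN0 : N ≠ 0 := by positivity
  have hsum : ∑ x : Fin m × Fin k → ZMod q,
      N * prodRows Y x * (N * unifOn B (z - x))
      = N * N / (B.card : ℝ) *
        ∑ x : Fin m × Fin k → ZMod q, (if z - x ∈ B then prodRows Y x else 0) := by
    rw [Finset.mul_sum]
    apply Finset.sum_congr rfl
    intro x _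
    simp only [unifOn]
    by_cases hx : z - x ∈ B
    · simp [hx]; field_simp
    · simp [hx]
  simp only [densityFn, postDist, convol, hN]
  rw [hsum]
  field_simp
  ring

end
end

section
/- Let q ≥ 2, let n,m,k,k' ∈ ℕ with k ≤ k', let D be a probability distribution on (ZMod q)^{n×k'}, let φ : [k] → [k'] be an injection, let Y be a one-wise uniform distribution on (ZMod q)^k, let M ∈ PHM(m,k,n), and let B ⊆ (ZMod q)^{m×k} satisfy p := Pr_{X∼D, Y∼Y^{⊗m}}[Π^φ_M X − Y ∈ B] > 0; set ν := (|B|/q^{m·k})/p. Then for every h ∈ ℕ: Σ_{W ∈ (ZMod q)^{n×k'} : wt(W) = h} |μ̂_{Post(D;M,B)}(W)| ≤ ν · Σ_{V ∈ (ZMod q)^{n×k'}} |μ̂_D(V)| · Σ_{U} |μ̂_B(U)|, where the inner sum ranges over all singleton-free U ∈ (ZMod q)^{m×k} with wt(U + Π^φ_M V) = h − (wt(V) − wt(Π^φ_M V)). -/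
set_option linter.unusedSectionVars false


open Finset

noncomputable section

attribute [local instance] Classical.propDecidable

namespace S15
open Finset

variable {q : ℕ} [NeZero q]

def zch (q : ℕ) [NeZero q] (a : ZMod q) : ℂ := omegaQ q ^ (-(a.val : ℤ))

lemma omega_ne_zero : omegaQ q ≠ 0 := Complex.exp_ne_zero _

lemma omega_prim : IsPrimitiveRoot (omegaQ q) q := Complex.isPrimitiveRoot_exp q (NeZero.ne q)

lemma omega_pow_q : omegaQ q ^ (q : ℕ) = 1 := omega_prim.pow_eq_one

lemma omega_zpow_congr {x y : ℤ} (h : x ≡ y [ZMOD (q:ℤ)]) : omegaQ q ^ x = omegaQ q ^ y := by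
  obtain ⟨t, ht⟩ : (q:ℤ) ∣ x - y := Int.ModEq.dvd h.symm
  have hx : x = y + q * t := by linarith
  rw [hx, zpow_add₀ omega_ne_zero, zpow_mul, zpow_natCast, omega_pow_q, one_zpow, mul_one]

lemma zch_zero : zch q 0 = 1 := by simp [zch]

lemma zch_add (a b : ZMod q) : zch q (a + b) = zch q a * zch q b := by
  rw [zch, zch, zch, ← zpow_add₀ omega_ne_zero]
  apply omega_zpow_congr
  have h : (a+b).val = (a.val + b.val) % q := ZMod.val_add a b
  have hr : -(a.val:ℤ) + -(b.val:ℤ) = -((a.val:ℤ)+(b.val:ℤ)) := by ring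
  rw [hr]
  apply Int.ModEq.neg
  unfold Int.ModEq
  rw [h]
  push_cast
  rw [Int.emod_emod_of_dvd _ (dvd_refl _)]

lemma zch_natmul (c : ZMod q) (t : ℕ) : zch q (t • c) = (zch q c) ^ t := by
  induction t with
  | zero => simp [zch_zero]
  | succ s ih => rw [succ_nsmul, zch_add, ih, pow_succ]

lemma abs_omega : ‖omegaQ q‖ = 1 := by
  rw [omegaQ, show (2 * Real.pi * Complex.I / q : ℂ) = ((2*Real.pi/q : ℝ):ℂ) * Complex.I by push_cast; ring,
    Complex.norm_exp_ofReal_mul_I]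

lemma abs_zch (a : ZMod q) : ‖zch q a‖ = 1 := by
  rw [zch, norm_zpow, abs_omega, one_zpow]

lemma zch_ne_one {c : ZMod q} (hc : c ≠ 0) : zch q c ≠ 1 := by
  rw [zch]
  intro h
  have hdvd : (q:ℤ) ∣ (-(c.val:ℤ)) := omega_prim.zpow_eq_one_iff_dvd _ |>.mp h
  have h1 : (q:ℤ) ∣ (c.val:ℤ) := (dvd_neg.mp hdvd)
  have h2 : c.val < q := ZMod.val_lt c
  have h3 : c.val ≠ 0 := fun h0 => hc (ZMod.val_eq_zero c |>.mp h0)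
  have h4 : q ∣ c.val := Int.natCast_dvd_natCast.mp h1
  have := Nat.le_of_dvd (Nat.pos_of_ne_zero h3) h4
  omega

lemma zch_pow_q (a : ZMod q) : (zch q a) ^ q = 1 := by
  rw [zch, ← zpow_natCast, ← zpow_mul, show (-(a.val:ℤ)) * q = (q:ℤ) * (-(a.val:ℤ)) by ring,
    zpow_mul, zpow_natCast, omega_pow_q, one_zpow]

lemma sum_zch_mul {c : ZMod q} (hc : c ≠ 0) : ∑ b : ZMod q, zch q (c * b) = 0 := by
  have hval : ∀ b : ZMod q, zch q (c * b) = (zch q c) ^ b.val := by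
    intro b
    rw [← zch_natmul]
    congr 1
    rw [nsmul_eq_mul]
    push_cast [ZMod.natCast_val, ZMod.cast_id]
    ring
  rw [Finset.sum_congr rfl (fun b _ => hval b)]
  have hbij : ∑ b : ZMod q, (zch q c) ^ b.val = ∑ t ∈ Finset.range q, (zch q c) ^ t := by
    refine Finset.sum_nbij' (fun b => b.val) (fun t => (t : ZMod q)) ?_ ?_ ?_ ?_ ?_
    · intro b _; exact Finset.mem_range.mpr (ZMod.val_lt b)
    · intro t _; exact Finset.mem_univ _
    · intro b _; simp [ZMod.natCast_val, ZMod.cast_id]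
    · intro t ht; exact ZMod.val_cast_of_lt (Finset.mem_range.mp ht)
    · intro b _; rfl
  rw [hbij, geom_sum_eq (zch_ne_one hc), zch_pow_q, sub_self, zero_div]

lemma sum_zch_all (c : ZMod q) : ∑ b : ZMod q, zch q (c * b) = if c = 0 then (q:ℂ) else 0 := by
  by_cases hc : c = 0
  · simp [hc, zch_zero, ZMod.card]
  · simp [hc, sum_zch_mul hc]

lemma sum_zch_all' (c : ZMod q) :
    ∑ b : ZMod q, zch q (b * c) = if c = 0 then (q:ℂ) else 0 := by
  rw [Finset.sum_congr rfl (fun b _ => by rw [mul_comm]), sum_zch_all]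

lemma zch_finset_sum {I : Type*} (s : Finset I) (f : I → ZMod q) :
    zch q (∑ i ∈ s, f i) = ∏ i ∈ s, zch q (f i) := by
  induction s using Finset.cons_induction with
  | empty => simp [zch_zero]
  | cons a s ha ih => rw [Finset.sum_cons, Finset.prod_cons, zch_add, ih]

lemma card_fn_ne_zero {I : Type*} [Fintype I] [DecidableEq I] :
    ((Fintype.card (I → ZMod q) : ℂ)) ≠ 0 :=
  Nat.cast_ne_zero.mpr Fintype.card_ne_zero

/-- The Fourier coefficient of a density as a plain character sum. -/
lemma fourier_eq_sum {I : Type*} [Fintype I] [DecidableEq I] (D : (I → ZMod q) → ℝ)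
    (u : I → ZMod q) :
    fourierDensity D u = ∑ x : I → ZMod q, (D x : ℂ) * zch q (∑ i, u i * x i) := by
  have hc : ((Fintype.card (I → ZMod q) : ℂ)) ≠ 0 := card_fn_ne_zero
  unfold fourierDensity fcoef densityFn
  rw [div_eq_iff hc, Finset.sum_mul]
  apply Finset.sum_congr rfl
  intro x _
  simp only [zch]
  generalize omegaQ q ^ (-((∑ i, u i * x i : ZMod q).val : ℤ)) = w
  push_cast
  ring

/-- Orthogonality of characters on the vector group. -/
lemma sum_zch_inner {I : Type*} [Fintype I] [DecidableEq I] (A : I → ZMod q) :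
    ∑ u : I → ZMod q, zch q (∑ i, u i * A i)
      = if A = 0 then ((Fintype.card (I → ZMod q)):ℂ) else 0 := by
  rw [Finset.sum_congr rfl (fun u _ => zch_finset_sum univ (fun i => u i * A i))]
  rw [← Fintype.prod_sum (f := fun i c => zch q (c * A i))]
  rw [Finset.prod_congr rfl (fun i _ => sum_zch_all' (A i))]
  by_cases hA : A = 0
  · rw [if_pos hA]
    have : ∀ i : I, A i = 0 := fun i => by rw [hA]; rfl
    rw [Finset.prod_congr rfl (fun i _ => if_pos (this i))]
    rw [Finset.prod_const, Fintype.card_fun, ZMod.card, Finset.card_univ]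
    push_cast
    ring
  · obtain ⟨i, hi⟩ : ∃ i, A i ≠ 0 := by
      by_contra hc; push_neg at hc; exact hA (funext hc)
    rw [if_neg hA, Finset.prod_eq_zero (Finset.mem_univ i)]
    rw [if_neg hi]

/-- Fourier expansion of the indicator of a set `B`. -/
lemma indic_expand {I : Type*} [Fintype I] [DecidableEq I] (B : Finset (I → ZMod q))
    (Z : I → ZMod q) :
    (if Z ∈ B then (1:ℂ) else 0)
      = (1/((Fintype.card (I → ZMod q)):ℂ)) * ∑ u : I → ZMod q,
          (∑ z ∈ B, zch q (∑ i, u i * z i)) * zch q (-(∑ i, u i * Z i)) := by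
  have key : ∀ u : I → ZMod q,
      (∑ z ∈ B, zch q (∑ i, u i * z i)) * zch q (-(∑ i, u i * Z i))
        = ∑ z ∈ B, zch q (∑ i, u i * (z i - Z i)) := by
    intro u
    rw [Finset.sum_mul]
    apply Finset.sum_congr rfl
    intro z _
    rw [← zch_add]
    congr 1
    rw [← Finset.sum_neg_distrib, ← Finset.sum_add_distrib]
    apply Finset.sum_congr rfl
    intro i _
    rw [mul_sub, sub_eq_add_neg]
  rw [Finset.sum_congr rfl (fun u _ => key u), Finset.sum_comm]
  have key2 : ∀ z : I → ZMod q, ∑ u : I → ZMod q, zch q (∑ i, u i * (z i - Z i))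
      = if z = Z then ((Fintype.card (I → ZMod q)):ℂ) else 0 := by
    intro z
    rw [sum_zch_inner (fun i => z i - Z i)]
    congr 1
    simp only [eq_iff_iff, funext_iff, Pi.zero_apply, sub_eq_zero]
  rw [Finset.sum_congr rfl (fun z _ => key2 z), Finset.sum_ite_eq' B Z]
  have hc : ((Fintype.card (I → ZMod q) : ℂ)) ≠ 0 := card_fn_ne_zero
  by_cases hZ : Z ∈ B
  · rw [if_pos hZ, if_pos hZ]
    field_simp
  · rw [if_neg hZ, if_neg hZ, mul_zero]

section Main

variable {q m k n k' : ℕ} [NeZero q]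

/-- The adjoint (transpose) of the projection `Π^φ_M`. -/
def adjT (φ : Fin k → Fin k') (M : Fin m → Fin k → Fin n) (U : Fin m × Fin k → ZMod q) :
    Fin n × Fin k' → ZMod q :=
  fun p => ∑ jl : Fin m × Fin k, if (M jl.1 jl.2, φ jl.2) = p then U jl else 0

lemma adjT_inner (φ : Fin k → Fin k') (M : Fin m → Fin k → Fin n)
    (U : Fin m × Fin k → ZMod q) (X : Fin n × Fin k' → ZMod q) :
    (∑ p : Fin n × Fin k', adjT φ M U p * X p)
      = ∑ jl : Fin m × Fin k, U jl * projMap φ M X jl := by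
  unfold adjT projMap
  simp only [Finset.sum_mul, ite_mul, zero_mul]
  rw [Finset.sum_comm]
  apply Finset.sum_congr rfl
  intro jl _
  rw [Fintype.sum_ite_eq (M jl.1 jl.2, φ jl.2) (fun p => U jl * X p)]

lemma e_inj (φ : Fin k → Fin k') (hφ : Function.Injective φ) (M : Fin m → Fin k → Fin n)
    (hM : ∀ ℓ : Fin k, Function.Injective fun j => M j ℓ) :
    Function.Injective (fun jl : Fin m × Fin k => ((M jl.1 jl.2, φ jl.2) : Fin n × Fin k')) := by
  rintro ⟨j1, l1⟩ ⟨j2, l2⟩ hh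
  simp only [Prod.mk.injEq] at hh
  have hl : l1 = l2 := hφ hh.2
  subst hl
  have hj : j1 = j2 := hM l1 hh.1
  subst hj
  rfl

lemma adjT_apply_e {φ : Fin k → Fin k'} {M : Fin m → Fin k → Fin n}
    (hinj : Function.Injective
      (fun jl : Fin m × Fin k => ((M jl.1 jl.2, φ jl.2) : Fin n × Fin k')))
    (U : Fin m × Fin k → ZMod q) (jl : Fin m × Fin k) :
    adjT φ M U (M jl.1 jl.2, φ jl.2) = U jl := by
  unfold adjT
  rw [Finset.sum_eq_single jl]
  · rw [if_pos rfl]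
  · intro b _ hb
    exact if_neg (fun hc => hb (hinj hc))
  · intro habs; exact absurd (Finset.mem_univ jl) habs

lemma adjT_apply_nmem {φ : Fin k → Fin k'} {M : Fin m → Fin k → Fin n}
    (U : Fin m × Fin k → ZMod q) (p : Fin n × Fin k')
    (hp : ∀ jl : Fin m × Fin k, (M jl.1 jl.2, φ jl.2) ≠ p) :
    adjT φ M U p = 0 := by
  unfold adjT
  exact Finset.sum_eq_zero (fun jl _ => if_neg (hp jl))

lemma wt_eq_sum {I : Type*} [Fintype I] (f : I → ZMod q) :
    wt f = ∑ i : I, if f i ≠ 0 then 1 else 0 := Finset.card_filter _ _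

/-- The key weight bookkeeping identity. -/
lemma wt_key (φ : Fin k → Fin k') (hφ : Function.Injective φ) (M : Fin m → Fin k → Fin n)
    (hM : ∀ ℓ : Fin k, Function.Injective fun j => M j ℓ)
    (V : Fin n × Fin k' → ZMod q) (U : Fin m × Fin k → ZMod q) :
    wt (V + adjT φ M U) + wt (projMap φ M V) = wt (U + projMap φ M V) + wt V := by
  classical
  set e := fun jl : Fin m × Fin k => ((M jl.1 jl.2, φ jl.2) : Fin n × Fin k') with he
  have hinj : Function.Injective e := e_inj φ hφ M hM
  set A : Finset (Fin n × Fin k') := Finset.univ.image e with hA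
  have hsplit : ∀ g : Fin n × Fin k' → ℕ,
      (∑ p, g p) = (∑ p ∈ A, g p) + ∑ p ∈ Aᶜ, g p :=
    fun g => (Finset.sum_add_sum_compl A g).symm
  have himg : ∀ g : Fin n × Fin k' → ℕ,
      (∑ p ∈ A, g p) = ∑ jl : Fin m × Fin k, g (e jl) := by
    intro g
    rw [hA, Finset.sum_image (fun a _ b _ hab => hinj hab)]
  have h1 : wt (V + adjT φ M U)
      = (∑ jl : Fin m × Fin k, if V (e jl) + U jl ≠ 0 then 1 else 0)
        + ∑ p ∈ Aᶜ, (if V p ≠ 0 then 1 else 0) := by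
    rw [wt_eq_sum, hsplit, himg]
    congr 1
    · apply Finset.sum_congr rfl
      intro jl _
      have : (V + adjT φ M U) (e jl) = V (e jl) + U jl := by
        rw [Pi.add_apply, adjT_apply_e hinj U jl]
      rw [this]
    · apply Finset.sum_congr rfl
      intro p hp
      have hnm : ∀ jl : Fin m × Fin k, (M jl.1 jl.2, φ jl.2) ≠ p := by
        intro jl hc
        have : p ∈ A := by
          rw [hA]; exact Finset.mem_image.mpr ⟨jl, Finset.mem_univ jl, hc⟩
        exact (Finset.mem_compl.mp hp) this
      have : (V + adjT φ M U) p = V p := by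
        rw [Pi.add_apply, adjT_apply_nmem U p hnm, add_zero]
      rw [this]
  have h2 : wt V
      = (∑ jl : Fin m × Fin k, if V (e jl) ≠ 0 then 1 else 0)
        + ∑ p ∈ Aᶜ, (if V p ≠ 0 then 1 else 0) := by
    rw [wt_eq_sum, hsplit, himg]
  have h3 : wt (projMap φ M V)
      = ∑ jl : Fin m × Fin k, if V (e jl) ≠ 0 then 1 else 0 := by
    rw [wt_eq_sum]
    apply Finset.sum_congr rfl
    intro jl _
    rfl
  have h4 : wt (U + projMap φ M V)
      = ∑ jl : Fin m × Fin k, if V (e jl) + U jl ≠ 0 then 1 else 0 := by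
    rw [wt_eq_sum]
    apply Finset.sum_congr rfl
    intro jl _
    have : (U + projMap φ M V) jl = V (e jl) + U jl := by
      rw [Pi.add_apply, add_comm]
      rfl
    rw [this]
  rw [h1, h2, h3, h4]
  omega

/-- The Fourier transform of `Y^{⊗m}` at `U`. -/
def TY (Y : (Fin k → ZMod q) → ℝ) (U : Fin m × Fin k → ZMod q) : ℂ :=
  ∑ Yv : Fin m × Fin k → ZMod q,
    ((prodRows Y Yv : ℝ) : ℂ) * zch q (∑ jl : Fin m × Fin k, U jl * Yv jl)

lemma TY_factor (Y : (Fin k → ZMod q) → ℝ) (U : Fin m × Fin k → ZMod q) :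
    TY Y U = ∏ j : Fin m, ∑ y : Fin k → ZMod q,
      (Y y : ℂ) * zch q (∑ ℓ : Fin k, U (j, ℓ) * y ℓ) := by
  rw [Fintype.prod_sum (f := fun (j : Fin m) (y : Fin k → ZMod q) =>
    (Y y : ℂ) * zch q (∑ ℓ : Fin k, U (j, ℓ) * y ℓ))]
  rw [TY, ← Equiv.sum_comp (Equiv.curry (Fin m) (Fin k) (ZMod q)).symm
    (fun Yv => ((prodRows Y Yv : ℝ) : ℂ) * zch q (∑ jl : Fin m × Fin k, U jl * Yv jl))]
  apply Finset.sum_congr rfl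
  intro g _
  have h1 : ((prodRows Y ((Equiv.curry (Fin m) (Fin k) (ZMod q)).symm g) : ℝ) : ℂ)
      = ∏ j : Fin m, (Y (g j) : ℂ) := by
    rw [prodRows]
    push_cast
    rfl
  have h2 : zch q (∑ jl : Fin m × Fin k, U jl * ((Equiv.curry (Fin m) (Fin k) (ZMod q)).symm g) jl)
      = ∏ j : Fin m, zch q (∑ ℓ : Fin k, U (j, ℓ) * g j ℓ) := by
    rw [Fintype.sum_prod_type, zch_finset_sum]
    rfl
  rw [h1, h2, ← Finset.prod_mul_distrib]

lemma TY_abs_le (Y : (Fin k → ZMod q) → ℝ) (hY : IsDist Y) (U : Fin m × Fin k → ZMod q) :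
    ‖TY Y U‖ ≤ 1 := by
  rw [TY_factor, norm_prod]
  have hb : ∀ j : Fin m,
      ‖∑ y : Fin k → ZMod q, (Y y : ℂ) * zch q (∑ ℓ : Fin k, U (j, ℓ) * y ℓ)‖ ≤ 1 := by
    intro j
    calc ‖∑ y : Fin k → ZMod q, (Y y : ℂ) * zch q (∑ ℓ : Fin k, U (j, ℓ) * y ℓ)‖
        ≤ ∑ y : Fin k → ZMod q, ‖(Y y : ℂ) * zch q (∑ ℓ : Fin k, U (j, ℓ) * y ℓ)‖ :=
          norm_sum_le _ _
      _ = ∑ y : Fin k → ZMod q, Y y := by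
          apply Finset.sum_congr rfl
          intro y _
          rw [norm_mul, abs_zch, mul_one, Complex.norm_real, Real.norm_of_nonneg (hY.1 y)]
      _ = 1 := hY.2
  calc (∏ j : Fin m, ‖∑ y : Fin k → ZMod q, (Y y : ℂ) * zch q (∑ ℓ : Fin k, U (j, ℓ) * y ℓ)‖)
      ≤ ∏ _j : Fin m, (1:ℝ) :=
        Finset.prod_le_prod (fun j _ => norm_nonneg _) (fun j _ => hb j)
    _ = 1 := Finset.prod_const_one

lemma TY_eq_zero (Y : (Fin k → ZMod q) → ℝ) (hY1 : OneWise Y)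
    (U : Fin m × Fin k → ZMod q) (hU : ¬ SingletonFree U) : TY Y U = 0 := by
  rw [TY_factor]
  unfold SingletonFree at hU
  push_neg at hU
  obtain ⟨j, hj⟩ := hU
  apply Finset.prod_eq_zero (Finset.mem_univ j)
  obtain ⟨ℓ₀, hℓ⟩ := Finset.card_eq_one.mp hj
  have hU0 : U (j, ℓ₀) ≠ 0 := by
    have : ℓ₀ ∈ Finset.univ.filter (fun ℓ => U (j, ℓ) ≠ 0) := by
      rw [hℓ]; exact Finset.mem_singleton_self ℓ₀
    exact (Finset.mem_filter.mp this).2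
  have hUz : ∀ ℓ : Fin k, ℓ ≠ ℓ₀ → U (j, ℓ) = 0 := by
    intro ℓ hne
    by_contra hcon
    have : ℓ ∈ Finset.univ.filter (fun ℓ => U (j, ℓ) ≠ 0) :=
      Finset.mem_filter.mpr ⟨Finset.mem_univ _, hcon⟩
    rw [hℓ] at this
    exact hne (Finset.mem_singleton.mp this)
  have hsum : ∀ y : Fin k → ZMod q, (∑ ℓ : Fin k, U (j, ℓ) * y ℓ) = U (j, ℓ₀) * y ℓ₀ := by
    intro y
    rw [Finset.sum_eq_single ℓ₀]
    · intro b _ hb; rw [hUz b hb, zero_mul]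
    · intro habs; exact absurd (Finset.mem_univ _) habs
  rw [Finset.sum_congr rfl (fun y _ => by rw [hsum y])]
  have hgroup : (∑ y : Fin k → ZMod q, (Y y : ℂ) * zch q (U (j, ℓ₀) * y ℓ₀))
      = ∑ b : ZMod q, zch q (U (j, ℓ₀) * b) * (((1/(q:ℝ)) : ℝ) : ℂ) := by
    have expand : ∀ y : Fin k → ZMod q, (Y y : ℂ) * zch q (U (j, ℓ₀) * y ℓ₀)
        = ∑ b : ZMod q, if y ℓ₀ = b then (Y y : ℂ) * zch q (U (j, ℓ₀) * b) else 0 := by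
      intro y
      rw [Fintype.sum_ite_eq (y ℓ₀) (fun b => (Y y : ℂ) * zch q (U (j, ℓ₀) * b))]
    rw [Finset.sum_congr rfl (fun y _ => expand y), Finset.sum_comm]
    apply Finset.sum_congr rfl
    intro b _
    have : (∑ y : Fin k → ZMod q, if y ℓ₀ = b then (Y y : ℂ) * zch q (U (j, ℓ₀) * b) else 0)
        = (∑ y : Fin k → ZMod q, if y ℓ₀ = b then (Y y : ℂ) else 0) * zch q (U (j, ℓ₀) * b) := by
      rw [Finset.sum_mul]
      apply Finset.sum_congr rfl
      intro y _
      rw [ite_mul, zero_mul]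
    rw [this]
    have hcast : (∑ y : Fin k → ZMod q, if y ℓ₀ = b then (Y y : ℂ) else 0)
        = (((∑ y : Fin k → ZMod q, if y ℓ₀ = b then Y y else 0 : ℝ)) : ℂ) := by
      push_cast
      apply Finset.sum_congr rfl
      intro y _
      split_ifs <;> simp
    rw [hcast, hY1 ℓ₀ b]
    push_cast
    ring
  rw [hgroup, ← Finset.sum_mul, sum_zch_mul hU0, zero_mul]

lemma SB_eq (B : Finset (Fin m × Fin k → ZMod q)) (U : Fin m × Fin k → ZMod q) :
    (∑ z ∈ B, zch q (∑ i : Fin m × Fin k, U i * z i))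
      = (B.card : ℂ) * fourierDensity (unifOn B) U := by
  rw [fourier_eq_sum]
  by_cases hB : B.card = 0
  · have hBe : B = ∅ := Finset.card_eq_zero.mp hB
    subst hBe
    simp [unifOn]
  · have hBC : ((B.card : ℝ)) ≠ 0 := Nat.cast_ne_zero.mpr hB
    trans (∑ x : Fin m × Fin k → ZMod q, if x ∈ B then zch q (∑ i : Fin m × Fin k, U i * x i) else 0)
    · rw [Finset.sum_ite_mem, Finset.univ_inter]
    · rw [Finset.mul_sum]
      apply Finset.sum_congr rfl
      intro x _
      unfold unifOn
      split_ifs with hx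
      · have hBCc : ((B.card:ℂ)) ≠ 0 := Nat.cast_ne_zero.mpr hB
        push_cast
        field_simp
      · push_cast
        ring

lemma char_split (φ : Fin k → Fin k') (M : Fin m → Fin k → Fin n)
    (U : Fin m × Fin k → ZMod q) (W X : Fin n × Fin k' → ZMod q)
    (Yv : Fin m × Fin k → ZMod q) :
    zch q (-(∑ i : Fin m × Fin k, U i * (projMap φ M X - Yv) i))
        * zch q (∑ p : Fin n × Fin k', W p * X p)
      = zch q (∑ jl : Fin m × Fin k, U jl * Yv jl)
        * zch q (∑ p : Fin n × Fin k', (W - adjT φ M U) p * X p) := by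
  rw [← zch_add, ← zch_add]
  congr 1
  have h1 : (∑ i : Fin m × Fin k, U i * (projMap φ M X - Yv) i)
      = (∑ i : Fin m × Fin k, U i * projMap φ M X i) - ∑ i : Fin m × Fin k, U i * Yv i := by
    rw [← Finset.sum_sub_distrib]
    apply Finset.sum_congr rfl
    intro i _
    rw [Pi.sub_apply, mul_sub]
  have h2 : (∑ p : Fin n × Fin k', (W - adjT φ M U) p * X p)
      = (∑ p : Fin n × Fin k', W p * X p) - ∑ i : Fin m × Fin k, U i * projMap φ M X i := by
    rw [← adjT_inner, ← Finset.sum_sub_distrib]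
    apply Finset.sum_congr rfl
    intro p _
    rw [Pi.sub_apply, sub_mul]
  rw [h1, h2]
  ring

/-- The key Fourier identity for the posterior. -/
lemma key_identity (D : (Fin n × Fin k' → ZMod q) → ℝ) (Y : (Fin k → ZMod q) → ℝ)
    (φ : Fin k → Fin k') (M : Fin m → Fin k → Fin n)
    (B : Finset (Fin m × Fin k → ZMod q)) (hp : pSucc D Y φ M B ≠ 0)
    (W : Fin n × Fin k' → ZMod q) :
    ((pSucc D Y φ M B : ℝ) : ℂ) * fourierDensity (postDist D Y φ M B) W
      = ((B.card : ℂ) / ((q:ℂ) ^ (m * k))) * ∑ U : Fin m × Fin k → ZMod q,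
          fourierDensity (unifOn B) U * (TY Y U * fourierDensity D (W - adjT φ M U)) := by
  classical
  set N2 : ℂ := ((Fintype.card (Fin m × Fin k → ZMod q)) : ℂ) with hN2
  have hN2q : N2 = (q:ℂ) ^ (m * k) := by
    rw [hN2, Fintype.card_fun, ZMod.card, Fintype.card_prod, Fintype.card_fin, Fintype.card_fin]
    push_cast
    ring
  have hpC : ((pSucc D Y φ M B : ℝ) : ℂ) ≠ 0 := Complex.ofReal_ne_zero.mpr hp
  have step1 : ((pSucc D Y φ M B : ℝ) : ℂ) * fourierDensity (postDist D Y φ M B) W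
      = ∑ X : Fin n × Fin k' → ZMod q, ∑ Yv : Fin m × Fin k → ZMod q,
          ((D X : ℂ) * ((prodRows Y Yv : ℝ) : ℂ))
            * ((if projMap φ M X - Yv ∈ B then (1:ℂ) else 0)
                * zch q (∑ p : Fin n × Fin k', W p * X p)) := by
    rw [fourier_eq_sum, Finset.mul_sum]
    apply Finset.sum_congr rfl
    intro X _
    have hpost : ((postDist D Y φ M B X : ℝ) : ℂ)
        = (D X : ℂ) * (∑ Yv : Fin m × Fin k → ZMod q,
            if projMap φ M X - Yv ∈ B then ((prodRows Y Yv : ℝ) : ℂ) else 0)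
          / ((pSucc D Y φ M B : ℝ) : ℂ) := by
      unfold postDist
      push_cast [apply_ite (fun r : ℝ => (r : ℂ))]
      ring
    rw [hpost]
    rw [show ∀ (S zc : ℂ), ((pSucc D Y φ M B : ℝ) : ℂ) * ((D X : ℂ) * S
          / ((pSucc D Y φ M B : ℝ) : ℂ) * zc) = (D X : ℂ) * S * zc from
        fun S zc => by field_simp]
    rw [mul_comm ((D X : ℂ)), Finset.sum_mul, Finset.sum_mul]
    apply Finset.sum_congr rfl
    intro Yv _
    split_ifs with hc <;> ring
  rw [step1]
  have step2 : ∀ X : Fin n × Fin k' → ZMod q, ∀ Yv : Fin m × Fin k → ZMod q,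
      ((D X : ℂ) * ((prodRows Y Yv : ℝ) : ℂ))
        * ((if projMap φ M X - Yv ∈ B then (1:ℂ) else 0)
            * zch q (∑ p : Fin n × Fin k', W p * X p))
      = ∑ U : Fin m × Fin k → ZMod q,
          (1/N2) * ((∑ z ∈ B, zch q (∑ i : Fin m × Fin k, U i * z i))
            * ((((prodRows Y Yv : ℝ) : ℂ) * zch q (∑ jl : Fin m × Fin k, U jl * Yv jl))
              * ((D X : ℂ) * zch q (∑ p : Fin n × Fin k', (W - adjT φ M U) p * X p)))) := by
    intro X Yv
    rw [indic_expand B (projMap φ M X - Yv)]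
    rw [Finset.mul_sum, Finset.sum_mul, Finset.mul_sum]
    apply Finset.sum_congr rfl
    intro U _
    have hchar := char_split φ M U W X Yv
    linear_combination ((1/N2) * (∑ z ∈ B, zch q (∑ i : Fin m × Fin k, U i * z i))
      * (D X : ℂ) * ((prodRows Y Yv : ℝ) : ℂ)) * hchar
  rw [Finset.sum_congr rfl (fun X _ => Finset.sum_congr rfl (fun Yv _ => step2 X Yv))]
  rw [Finset.sum_congr rfl (fun X _ => Finset.sum_comm)]
  rw [Finset.sum_comm]
  have step3 : ∀ U : Fin m × Fin k → ZMod q,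
      (∑ X : Fin n × Fin k' → ZMod q, ∑ Yv : Fin m × Fin k → ZMod q,
        (1/N2) * ((∑ z ∈ B, zch q (∑ i : Fin m × Fin k, U i * z i))
          * ((((prodRows Y Yv : ℝ) : ℂ) * zch q (∑ jl : Fin m × Fin k, U jl * Yv jl))
            * ((D X : ℂ) * zch q (∑ p : Fin n × Fin k', (W - adjT φ M U) p * X p)))))
      = (1/N2) * ((∑ z ∈ B, zch q (∑ i : Fin m × Fin k, U i * z i))
          * (TY Y U * fourierDensity D (W - adjT φ M U))) := by
    intro U
    rw [TY, fourier_eq_sum, Finset.sum_mul_sum]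
    simp only [Finset.mul_sum]
    rw [Finset.sum_comm]
  rw [Finset.sum_congr rfl (fun U _ => step3 U), Finset.mul_sum]
  apply Finset.sum_congr rfl
  intro U _
  rw [SB_eq, hN2q]
  ring

end Main

end S15

/-- Level-`h` Fourier 1-mass of the posterior density is controlled by
the Fourier coefficients of `μ_D` and `μ_B` over singleton-free shifts. -/
theorem posterior_level_mass_bound
    (q : ℕ) [NeZero q] (hq : 2 ≤ q) (n m k k' : ℕ) (hkk' : k ≤ k')
    (D : (Fin n × Fin k' → ZMod q) → ℝ) (hD : IsDist D)
    (φ : Fin k → Fin k') (hφ : Function.Injective φ)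
    (Y : (Fin k → ZMod q) → ℝ) (hY : IsDist Y) (hY1 : OneWise Y)
    (M : Fin m → Fin k → Fin n) (hM : M ∈ PHMset m k n)
    (B : Finset (Fin m × Fin k → ZMod q))
    (hp : 0 < pSucc D Y φ M B) :
    ∀ h : ℕ,
      ∑ W ∈ (univ : Finset (Fin n × Fin k' → ZMod q)).filter (fun W => wt W = h),
          ‖fourierDensity (postDist D Y φ M B) W‖
        ≤ (((B.card : ℝ) / (q : ℝ) ^ (m * k)) / pSucc D Y φ M B) *
            ∑ V : Fin n × Fin k' → ZMod q,
              ‖fourierDensity D V‖ *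
                ∑ U ∈ (univ : Finset (Fin m × Fin k → ZMod q)).filter
                    (fun U => SingletonFree U ∧
                      ((wt (U + projMap φ M V) : ℤ)
                        = (h : ℤ) - ((wt V : ℤ) - (wt (projMap φ M V) : ℤ)))),
                  ‖fourierDensity (unifOn B) U‖ := by
  intro h
  classical
  have hp0 : pSucc D Y φ M B ≠ 0 := ne_of_gt hp
  have hMinj : ∀ ℓ : Fin k, Function.Injective fun j => M j ℓ := (Finset.mem_filter.mp hM).2
  set F : (Fin m × Fin k → ZMod q) → ℝ :=
    fun U => ‖fourierDensity (unifOn B) U‖ with hF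
  set G : (Fin n × Fin k' → ZMod q) → ℝ :=
    fun V => ‖fourierDensity D V‖ with hG
  set cB : ℝ := ((B.card : ℝ) / (q:ℝ)^(m*k)) with hcB
  have hcB0 : 0 ≤ cB := by positivity
  have hpoint : ∀ W : Fin n × Fin k' → ZMod q,
      ‖fourierDensity (postDist D Y φ M B) W‖
        ≤ (cB / pSucc D Y φ M B) * ∑ U ∈ Finset.univ.filter
            (fun U : Fin m × Fin k → ZMod q => SingletonFree U),
              F U * G (W - S15.adjT φ M U) := by
    intro W
    have hkey := congrArg (‖·‖) (S15.key_identity D Y φ M B hp0 W)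
    rw [norm_mul, norm_mul, Complex.norm_real, Real.norm_of_nonneg hp.le] at hkey
    have hc2 : ‖(B.card : ℂ) / ((q:ℂ) ^ (m * k))‖ = cB := by
      rw [norm_div, norm_pow, Complex.norm_natCast, Complex.norm_natCast]
    rw [hc2] at hkey
    have hsum : ‖∑ U : Fin m × Fin k → ZMod q,
        fourierDensity (unifOn B) U * (S15.TY Y U * fourierDensity D (W - S15.adjT φ M U))‖
        ≤ ∑ U ∈ Finset.univ.filter (fun U : Fin m × Fin k → ZMod q => SingletonFree U),
            F U * G (W - S15.adjT φ M U) := by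
      have t1 : ‖∑ U : Fin m × Fin k → ZMod q,
          fourierDensity (unifOn B) U * (S15.TY Y U * fourierDensity D (W - S15.adjT φ M U))‖
          ≤ ∑ U : Fin m × Fin k → ZMod q, ‖fourierDensity (unifOn B) U * (S15.TY Y U * fourierDensity D (W - S15.adjT φ M U))‖ :=
        norm_sum_le _ _
      have t2 : (∑ U : Fin m × Fin k → ZMod q, ‖fourierDensity (unifOn B) U * (S15.TY Y U * fourierDensity D (W - S15.adjT φ M U))‖)
          = ∑ U ∈ Finset.univ.filter (fun U : Fin m × Fin k → ZMod q => SingletonFree U),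
              ‖fourierDensity (unifOn B) U
                * (S15.TY Y U * fourierDensity D (W - S15.adjT φ M U))‖ := by
        rw [← Finset.sum_filter_add_sum_filter_not Finset.univ
          (fun U : Fin m × Fin k → ZMod q => SingletonFree U)]
        have hz : (∑ U ∈ Finset.univ.filter
            (fun U : Fin m × Fin k → ZMod q => ¬ SingletonFree U),
              ‖fourierDensity (unifOn B) U
                * (S15.TY Y U * fourierDensity D (W - S15.adjT φ M U))‖) = 0 := by
          apply Finset.sum_eq_zero
          intro U hU
          rw [S15.TY_eq_zero Y hY1 U (Finset.mem_filter.mp hU).2, zero_mul, mul_zero, norm_zero]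
        rw [hz, add_zero]
      have t3 : (∑ U ∈ Finset.univ.filter (fun U : Fin m × Fin k → ZMod q => SingletonFree U),
            ‖fourierDensity (unifOn B) U
              * (S15.TY Y U * fourierDensity D (W - S15.adjT φ M U))‖)
          ≤ ∑ U ∈ Finset.univ.filter (fun U : Fin m × Fin k → ZMod q => SingletonFree U),
              F U * G (W - S15.adjT φ M U) := by
        apply Finset.sum_le_sum
        intro U _
        rw [norm_mul, norm_mul]
        calc ‖fourierDensity (unifOn B) U‖ * (‖S15.TY Y U‖
              * ‖fourierDensity D (W - S15.adjT φ M U)‖)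
            ≤ ‖fourierDensity (unifOn B) U‖ * (1
              * ‖fourierDensity D (W - S15.adjT φ M U)‖) := by
              apply mul_le_mul_of_nonneg_left _ (norm_nonneg _)
              apply mul_le_mul_of_nonneg_right (S15.TY_abs_le Y hY U) (norm_nonneg _)
          _ = F U * G (W - S15.adjT φ M U) := by rw [one_mul]
      exact le_trans t1 (le_of_le_of_eq (le_of_eq t2) rfl |>.trans t3)
    have hfinal : pSucc D Y φ M B * ‖fourierDensity (postDist D Y φ M B) W‖
        ≤ cB * ∑ U ∈ Finset.univ.filter (fun U : Fin m × Fin k → ZMod q => SingletonFree U),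
            F U * G (W - S15.adjT φ M U) := by
      rw [hkey]
      exact mul_le_mul_of_nonneg_left hsum hcB0
    have hstep : ‖fourierDensity (postDist D Y φ M B) W‖
        = pSucc D Y φ M B * ‖fourierDensity (postDist D Y φ M B) W‖
          / pSucc D Y φ M B := by
      field_simp
    rw [hstep, div_mul_eq_mul_div]
    exact div_le_div_of_nonneg_right hfinal hp.le |>.trans_eq rfl
  have hreindex : (∑ W ∈ Finset.univ.filter (fun W : Fin n × Fin k' → ZMod q => wt W = h),
        ∑ U ∈ Finset.univ.filter (fun U : Fin m × Fin k → ZMod q => SingletonFree U),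
          F U * G (W - S15.adjT φ M U))
      = ∑ V : Fin n × Fin k' → ZMod q, G V *
          ∑ U ∈ (Finset.univ : Finset (Fin m × Fin k → ZMod q)).filter
              (fun U => SingletonFree U ∧
                ((wt (U + projMap φ M V) : ℤ)
                  = (h : ℤ) - ((wt V : ℤ) - (wt (projMap φ M V) : ℤ)))),
            F U := by
    rw [Finset.sum_comm]
    have t1 : ∀ U : Fin m × Fin k → ZMod q,
        (∑ W ∈ Finset.univ.filter (fun W : Fin n × Fin k' → ZMod q => wt W = h),
          F U * G (W - S15.adjT φ M U))
        = ∑ V : Fin n × Fin k' → ZMod q,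
            if wt (V + S15.adjT φ M U) = h then F U * G V else 0 := by
      intro U
      rw [← Finset.sum_filter]
      refine Finset.sum_nbij' (fun W => W - S15.adjT φ M U) (fun V => V + S15.adjT φ M U)
        ?_ ?_ ?_ ?_ ?_
      · intro W hW
        rw [Finset.mem_filter] at hW ⊢
        refine ⟨Finset.mem_univ _, ?_⟩
        show wt (W - S15.adjT φ M U + S15.adjT φ M U) = h
        rw [sub_add_cancel]
        exact hW.2
      · intro V hV
        rw [Finset.mem_filter] at hV ⊢
        refine ⟨Finset.mem_univ _, ?_⟩
        exact hV.2
      · intro W _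
        show W - S15.adjT φ M U + S15.adjT φ M U = W
        rw [sub_add_cancel]
      · intro V _
        show V + S15.adjT φ M U - S15.adjT φ M U = V
        rw [add_sub_cancel_right]
      · intro W _
        rfl
    rw [Finset.sum_congr rfl (fun U _ => t1 U), Finset.sum_filter]
    have t2 : ∀ U : Fin m × Fin k → ZMod q,
        (if SingletonFree U then
          (∑ V : Fin n × Fin k' → ZMod q,
            if wt (V + S15.adjT φ M U) = h then F U * G V else 0) else 0)
        = ∑ V : Fin n × Fin k' → ZMod q,
            if SingletonFree U ∧ wt (V + S15.adjT φ M U) = h then F U * G V else 0 := by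
      intro U
      split_ifs with hSF
      · apply Finset.sum_congr rfl
        intro V _
        simp [hSF]
      · rw [eq_comm]
        apply Finset.sum_eq_zero
        intro V _
        rw [if_neg (fun hc => hSF hc.1)]
    rw [Finset.sum_congr rfl (fun U _ => t2 U), Finset.sum_comm]
    apply Finset.sum_congr rfl
    intro V _
    rw [Finset.sum_filter, Finset.mul_sum]
    apply Finset.sum_congr rfl
    intro U _
    have hw := S15.wt_key φ hφ M hMinj V U
    have hiff : wt (V + S15.adjT φ M U) = h ↔
        ((wt (U + projMap φ M V) : ℤ)
          = (h : ℤ) - ((wt V : ℤ) - (wt (projMap φ M V) : ℤ))) := by omega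
    split_ifs with h1 h2
    · ring
    · exact absurd ⟨h1.1, hiff.mp h1.2⟩ h2
    · exact absurd ⟨(by exact ‹SingletonFree U ∧ _›.1 : SingletonFree U), hiff.mpr ‹SingletonFree U ∧ _›.2⟩ h1
    · ring
  calc (∑ W ∈ Finset.univ.filter (fun W : Fin n × Fin k' → ZMod q => wt W = h),
        ‖fourierDensity (postDist D Y φ M B) W‖)
      ≤ ∑ W ∈ Finset.univ.filter (fun W : Fin n × Fin k' → ZMod q => wt W = h),
          (cB / pSucc D Y φ M B) * ∑ U ∈ Finset.univ.filter
            (fun U : Fin m × Fin k → ZMod q => SingletonFree U),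
              F U * G (W - S15.adjT φ M U) :=
        Finset.sum_le_sum (fun W _ => hpoint W)
    _ = (cB / pSucc D Y φ M B) * ∑ W ∈ Finset.univ.filter
          (fun W : Fin n × Fin k' → ZMod q => wt W = h),
          ∑ U ∈ Finset.univ.filter (fun U : Fin m × Fin k → ZMod q => SingletonFree U),
            F U * G (W - S15.adjT φ M U) := by rw [Finset.mul_sum]
    _ = (cB / pSucc D Y φ M B) * ∑ V : Fin n × Fin k' → ZMod q, G V *
          ∑ U ∈ (Finset.univ : Finset (Fin m × Fin k → ZMod q)).filter
              (fun U => SingletonFree U ∧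
                ((wt (U + projMap φ M V) : ℤ)
                  = (h : ℤ) - ((wt V : ℤ) - (wt (projMap φ M V) : ℤ)))),
            F U := by rw [hreindex]


end
end

section
/- Let q ≥ 2, let N ∈ ℕ, let h ∈ {1,…,N}, and let g : (ZMod q)^N → ℂ satisfy ‖g‖₁ = 1 and ‖g‖_∞ ≤ q^h. Then Σ_{u ∈ (ZMod q)^N : wt(u) = h} |ĝ(u)| ≤ (q²·e·N/h)^{h/2}. -/
open Finset

noncomputable section

attribute [local instance] Classical.propDecidable

namespace TrivAux

lemma addChar_map_sum {A M : Type*} [AddCommMonoid A] [CommMonoid M] (ψ : AddChar A M)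
    {ι : Type*} (s : Finset ι) (f : ι → A) :
    ψ (∑ i ∈ s, f i) = ∏ i ∈ s, ψ (f i) := by
  induction s using Finset.cons_induction with
  | empty => simp
  | cons i s hi ih => rw [Finset.sum_cons, Finset.prod_cons, AddChar.map_add_eq_mul, ih]

variable (q : ℕ) [NeZero q]

lemma omega_prim : IsPrimitiveRoot (omegaQ q) q :=
  Complex.isPrimitiveRoot_exp q (NeZero.ne q)

/-- The standard character of `ZMod q`. -/
def psi : AddChar (ZMod q) ℂ := AddChar.zmodChar q (omega_prim q).pow_eq_one

lemma psi_apply (a : ZMod q) : psi q a = omegaQ q ^ a.val := rfl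

lemma psi_eq_one_iff (a : ZMod q) : psi q a = 1 ↔ a = 0 :=
  AddChar.IsPrimitive.zmod_char_eq_one_iff q
    (AddChar.zmodChar_primitive_of_primitive_root q (omega_prim q)) a

lemma abs_omega : ‖omegaQ q‖ = 1 := by
  have h : (2 * (Real.pi:ℂ) * Complex.I / q) = ((2 * Real.pi / q : ℝ) : ℂ) * Complex.I := by
    push_cast; ring
  rw [omegaQ, h, Complex.norm_exp_ofReal_mul_I]

lemma abs_psi (a : ZMod q) : ‖psi q a‖ = 1 := by
  rw [psi_apply, norm_pow, abs_omega, one_pow]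

lemma conj_psi (a : ZMod q) : (starRingEnd ℂ) (psi q a) = (psi q a)⁻¹ :=
  (Complex.inv_eq_conj (by rw [abs_psi])).symm

lemma conj_psi_inv (a : ZMod q) : (starRingEnd ℂ) ((psi q a)⁻¹) = psi q a := by
  rw [map_inv₀, conj_psi, inv_inv]

lemma zpow_neg_val (a : ZMod q) : omegaQ q ^ (-(a.val : ℤ)) = (psi q a)⁻¹ := by
  rw [zpow_neg, zpow_natCast]; rfl

lemma psi_ne_zero (a : ZMod q) : psi q a ≠ 0 := by
  intro h0
  have := abs_psi q a
  rw [h0] at this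
  simp at this

lemma psi_sub_mul (a b : ZMod q) : (psi q a)⁻¹ * psi q b = psi q (b - a) := by
  have h : psi q b = psi q (b - a) * psi q a := by
    rw [← AddChar.map_add_eq_mul, sub_add_cancel]
  rw [h, mul_comm ((psi q) (b - a)) ((psi q) a), ← mul_assoc,
    inv_mul_cancel₀ (psi_ne_zero q a), one_mul]

lemma sum_psi (c : ZMod q) : ∑ x : ZMod q, psi q (x * c) = if c = 0 then (q : ℂ) else 0 := by
  split_ifs with hc
  · simp [hc, ZMod.card]
  · have h2 : AddChar.mulShift (psi q) c ≠ 0 := by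
      intro h0
      have h1 : AddChar.mulShift (psi q) c 1 = 1 := by rw [h0]; simp
      rw [AddChar.mulShift_apply, mul_one, psi_eq_one_iff] at h1
      exact hc h1
    have h3 := AddChar.sum_eq_zero_iff_ne_zero.mpr h2
    calc ∑ x : ZMod q, psi q (x * c) = ∑ x : ZMod q, AddChar.mulShift (psi q) c x := by
          simp [AddChar.mulShift_apply, mul_comm]
      _ = 0 := h3

lemma sum_psi_pi (N : ℕ) (z : Fin N → ZMod q) :
    ∑ u : Fin N → ZMod q, psi q (∑ i, u i * z i)
      = if z = 0 then ((q : ℂ) ^ N) else 0 := by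
  have step1 : ∑ u : Fin N → ZMod q, psi q (∑ i, u i * z i)
      = ∏ i, ∑ a : ZMod q, psi q (a * z i) := by
    rw [Fintype.prod_sum fun i a => psi q (a * z i)]
    exact Finset.sum_congr rfl fun u _ => addChar_map_sum (psi q) univ _
  rw [step1]
  split_ifs with hz
  · subst hz
    simp [ZMod.card]
  · obtain ⟨i, hi⟩ : ∃ i, z i ≠ 0 := by
      by_contra hcon
      push_neg at hcon
      exact hz (funext hcon)
    refine Finset.prod_eq_zero (Finset.mem_univ i) ?_
    rw [sum_psi, if_neg hi]

lemma sum_psi_orth (N : ℕ) (x y : Fin N → ZMod q) :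
    ∑ u : Fin N → ZMod q, (psi q (∑ i, u i * x i))⁻¹ * psi q (∑ i, u i * y i)
      = if y = x then ((q : ℂ) ^ N) else 0 := by
  have key : ∀ u : Fin N → ZMod q,
      (psi q (∑ i, u i * x i))⁻¹ * psi q (∑ i, u i * y i)
        = psi q (∑ i, u i * (y - x) i) := by
    intro u
    rw [psi_sub_mul]
    congr 1
    simp [mul_sub, Finset.sum_sub_distrib]
  simp only [key]
  rw [sum_psi_pi]
  congr 1
  simp [sub_eq_zero]

lemma parseval (N : ℕ) (g : (Fin N → ZMod q) → ℂ) :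
    ∑ u : Fin N → ZMod q, ‖fcoef g u‖ ^ 2 = norm2sq g := by
  have hQpos : (0:ℕ) < Fintype.card (Fin N → ZMod q) := Fintype.card_pos
  set Qc : ℂ := (Fintype.card (Fin N → ZMod q) : ℂ) with hQc
  have hQne : Qc ≠ 0 := Nat.cast_ne_zero.mpr hQpos.ne'
  have main : ∑ u : Fin N → ZMod q, fcoef g u * (starRingEnd ℂ) (fcoef g u)
      = (∑ x : Fin N → ZMod q, g x * (starRingEnd ℂ) (g x)) / Qc := by
    have hfc : ∀ u : Fin N → ZMod q, fcoef g u
        = (∑ x : Fin N → ZMod q, g x * (psi q (∑ i, u i * x i))⁻¹) / Qc := by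
      intro u
      simp only [fcoef, zpow_neg_val]
      rw [hQc]
    have hconj : ∀ u : Fin N → ZMod q, (starRingEnd ℂ) (fcoef g u)
        = (∑ y : Fin N → ZMod q, (starRingEnd ℂ) (g y) * psi q (∑ i, u i * y i)) / Qc := by
      intro u
      rw [hfc, map_div₀, map_sum]
      congr 1
      · exact Finset.sum_congr rfl fun y _ => by rw [map_mul, conj_psi_inv]
      · simp [hQc]
    have expand : ∀ u : Fin N → ZMod q, fcoef g u * (starRingEnd ℂ) (fcoef g u)
        = (∑ x : Fin N → ZMod q, ∑ y : Fin N → ZMod q,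
            (g x * (starRingEnd ℂ) (g y)) *
              ((psi q (∑ i, u i * x i))⁻¹ * psi q (∑ i, u i * y i))) / (Qc * Qc) := by
      intro u
      rw [hconj, hfc, div_mul_div_comm, Finset.sum_mul_sum]
      congr 1
      refine Finset.sum_congr rfl fun x _ => Finset.sum_congr rfl fun y _ => ?_
      ring
    calc ∑ u : Fin N → ZMod q, fcoef g u * (starRingEnd ℂ) (fcoef g u)
        = (∑ u : Fin N → ZMod q, ∑ x : Fin N → ZMod q, ∑ y : Fin N → ZMod q,
            (g x * (starRingEnd ℂ) (g y)) *
              ((psi q (∑ i, u i * x i))⁻¹ * psi q (∑ i, u i * y i))) / (Qc * Qc) := by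
          simp only [expand]
          rw [← Finset.sum_div]
      _ = (∑ x : Fin N → ZMod q, ∑ y : Fin N → ZMod q,
            (g x * (starRingEnd ℂ) (g y)) *
              (∑ u : Fin N → ZMod q,
                (psi q (∑ i, u i * x i))⁻¹ * psi q (∑ i, u i * y i))) / (Qc * Qc) := by
          rw [Finset.sum_comm]
          congr 1
          refine Finset.sum_congr rfl fun x _ => ?_
          rw [Finset.sum_comm]
          exact Finset.sum_congr rfl fun y _ => (Finset.mul_sum _ _ _).symm
      _ = (∑ x : Fin N → ZMod q, (g x * (starRingEnd ℂ) (g x)) * Qc) / (Qc * Qc) := by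
          congr 1
          refine Finset.sum_congr rfl fun x _ => ?_
          have hcard : ((q:ℂ)) ^ N = Qc := by
            rw [hQc, Fintype.card_pi]
            push_cast
            simp [ZMod.card]
          simp only [sum_psi_orth, mul_ite, mul_zero]
          rw [Finset.sum_ite_eq' univ x fun y => g x * (starRingEnd ℂ) (g y) * ((q:ℂ) ^ N)]
          rw [if_pos (Finset.mem_univ x), hcard]
      _ = (∑ x : Fin N → ZMod q, g x * (starRingEnd ℂ) (g x)) / Qc := by
          rw [← Finset.sum_mul, mul_div_assoc]
          congr 1
          rw [← div_div, div_self hQne, one_div]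
  have habs2 : ∀ z : ℂ, ((‖z‖ : ℂ)) ^ 2 = z * (starRingEnd ℂ) z := fun z => by
    rw [← Complex.ofReal_pow, Complex.sq_norm, Complex.mul_conj]
  have cast_eq : ((∑ u : Fin N → ZMod q, ‖fcoef g u‖ ^ 2 : ℝ) : ℂ)
      = ((norm2sq g : ℝ) : ℂ) := by
    rw [norm2sq]
    push_cast
    simp only [habs2]
    exact main
  exact_mod_cast cast_eq

lemma card_wt_le (N h : ℕ) :
    ((univ.filter fun u : Fin N → ZMod q => wt u = h)).card ≤ N.choose h * (q - 1) ^ h := by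
  classical
  set s := (univ.filter fun u : Fin N → ZMod q => wt u = h) with hs
  have H : ∀ u ∈ s, (univ.filter fun i => u i ≠ 0) ∈ univ.powersetCard h := by
    intro u hu
    rw [Finset.mem_powersetCard_univ]
    simpa [hs, wt, Finset.mem_filter] using hu
  rw [Finset.card_eq_sum_card_fiberwise H]
  calc ∑ S ∈ univ.powersetCard h,
        (s.filter fun u => (univ.filter fun i => u i ≠ 0) = S).card
      ≤ ∑ S ∈ univ.powersetCard h, (q - 1) ^ h := by
        refine Finset.sum_le_sum fun S hS => ?_
        rw [Finset.mem_powersetCard_univ] at hS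
        have hsub : (s.filter fun u => (univ.filter fun i => u i ≠ 0) = S)
            ⊆ Fintype.piFinset (fun i => if i ∈ S then (univ : Finset (ZMod q)) \ {0} else {0}) := by
          intro u hu
          rw [Finset.mem_filter] at hu
          rw [Fintype.mem_piFinset]
          intro i
          by_cases hiS : i ∈ S
          · rw [if_pos hiS]
            rw [← hu.2] at hiS
            simp only [Finset.mem_filter, Finset.mem_univ, true_and] at hiS
            simp [hiS]
          · rw [if_neg hiS]
            rw [← hu.2] at hiS
            simp only [Finset.mem_filter, Finset.mem_univ, true_and, not_not] at hiS
            simp [hiS]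
        calc (s.filter fun u => (univ.filter fun i => u i ≠ 0) = S).card
            ≤ (Fintype.piFinset (fun i => if i ∈ S then (univ : Finset (ZMod q)) \ {0}
                else {0})).card := Finset.card_le_card hsub
          _ = (q - 1) ^ h := by
              rw [Fintype.card_piFinset]
              have : ∀ i : Fin N, (if i ∈ S then (univ : Finset (ZMod q)) \ {0} else {0}).card
                  = if i ∈ S then q - 1 else 1 := by
                intro i
                split_ifs
                · rw [Finset.card_sdiff_of_subset (by simp)]
                  simp [ZMod.card]
                · simp
              simp only [this]
              rw [Finset.prod_ite_mem univ S fun _ => q - 1, Finset.univ_inter,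
                Finset.prod_const, hS]
      _ = N.choose h * (q - 1) ^ h := by
          rw [Finset.sum_const, smul_eq_mul, Finset.card_powersetCard, Finset.card_univ,
            Fintype.card_fin]

end TrivAux

/-- Trivial level-`h` inequality: if `‖g‖₁ = 1` and `‖g‖_∞ ≤ q^h`,
then the level-`h` Fourier 1-mass is at most `(q²·e·N/h)^{h/2}`. -/
theorem trivial_level_inequality
    (q : ℕ) [NeZero q] (hq : 2 ≤ q) (N : ℕ) (h : ℕ) (hh1 : 1 ≤ h) (hhN : h ≤ N)
    (g : (Fin N → ZMod q) → ℂ) (hg1 : norm1 g = 1)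
    (hgi : normInf g ≤ (q : ℝ) ^ h) :
    ∑ u ∈ univ.filter (fun u : Fin N → ZMod q => wt u = h), ‖fcoef g u‖
      ≤ ((q : ℝ) ^ 2 * Real.exp 1 * N / h) ^ ((h : ℝ) / 2) := by
  classical
  set s := (univ.filter fun u : Fin N → ZMod q => wt u = h) with hs
  set A := ∑ u ∈ s, ‖fcoef g u‖ with hA
  set X := ((q : ℝ) ^ 2 * Real.exp 1 * N / h) with hX
  have hq0 : (0:ℝ) < q := by positivity
  have hh0 : (0:ℝ) < h := by exact_mod_cast hh1
  have hN0 : (0:ℝ) < N := lt_of_lt_of_le hh0 (by exact_mod_cast hhN)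
  have hXnn : 0 ≤ X := by rw [hX]; positivity
  have hAnn : 0 ≤ A := Finset.sum_nonneg fun u _ => norm_nonneg _
  -- Cauchy–Schwarz
  have hCS : A ^ 2 ≤ (s.card : ℝ) * ∑ u ∈ s, ‖fcoef g u‖ ^ 2 :=
    sq_sum_le_card_mul_sum_sq
  -- Parseval and the 2-norm bound
  have hsum2 : ∑ u ∈ s, ‖fcoef g u‖ ^ 2 ≤ norm2sq g := by
    calc ∑ u ∈ s, ‖fcoef g u‖ ^ 2
        ≤ ∑ u : Fin N → ZMod q, ‖fcoef g u‖ ^ 2 :=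
          Finset.sum_le_sum_of_subset_of_nonneg (Finset.subset_univ s)
            (fun _ _ _ => by positivity)
      _ = norm2sq g := TrivAux.parseval q N g
  have hbdd : ∀ x, ‖g x‖ ≤ normInf g := fun x =>
    le_ciSup (f := fun y => ‖g y‖) (Set.Finite.bddAbove (Set.finite_range _)) x
  have hInfnn : 0 ≤ normInf g := le_trans (norm_nonneg _) (hbdd default)
  have h2inf : norm2sq g ≤ (q:ℝ) ^ h := by
    have hstep : ∑ x : Fin N → ZMod q, ‖g x‖ ^ 2
        ≤ normInf g * ∑ x : Fin N → ZMod q, ‖g x‖ := by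
      rw [Finset.mul_sum]
      refine Finset.sum_le_sum fun x _ => ?_
      rw [sq]
      exact mul_le_mul_of_nonneg_right (hbdd x) (norm_nonneg _)
    have hcard : (0:ℝ) < (Fintype.card (Fin N → ZMod q) : ℝ) := by
      exact_mod_cast Fintype.card_pos
    calc norm2sq g = (∑ x : Fin N → ZMod q, ‖g x‖ ^ 2)
          / (Fintype.card (Fin N → ZMod q) : ℝ) := rfl
      _ ≤ (normInf g * ∑ x : Fin N → ZMod q, ‖g x‖)
          / (Fintype.card (Fin N → ZMod q) : ℝ) := by
          exact div_le_div_of_nonneg_right hstep hcard.le |>.trans_eq rfl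
      _ = normInf g * norm1 g := by rw [norm1, mul_div_assoc]
      _ = normInf g := by rw [hg1, mul_one]
      _ ≤ (q:ℝ) ^ h := hgi
  -- cardinality bound
  have hcardle : (s.card : ℝ) ≤ (q:ℝ) ^ h * ((N:ℝ) ^ h * Real.exp 1 ^ h / (h:ℝ) ^ h) := by
    have h1 : (s.card : ℝ) ≤ (N.choose h : ℝ) * ((q - 1 : ℕ) : ℝ) ^ h := by
      have := TrivAux.card_wt_le q N h
      exact_mod_cast this
    have h2 : ((q - 1 : ℕ) : ℝ) ^ h ≤ (q:ℝ) ^ h := by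
      apply pow_le_pow_left₀ (by positivity)
      have : ((q - 1 : ℕ) : ℝ) ≤ (q : ℕ) := by exact_mod_cast Nat.sub_le q 1
      exact_mod_cast this
    have h3 : (N.choose h : ℝ) ≤ (N:ℝ) ^ h * Real.exp 1 ^ h / (h:ℝ) ^ h := by
      have hc : (N.choose h : ℝ) ≤ (N:ℝ) ^ h / (h.factorial : ℝ) := by
        exact_mod_cast Nat.choose_le_pow_div h N
      have hfact : (h:ℝ) ^ h / (h.factorial : ℝ) ≤ Real.exp 1 ^ h := by
        have := Real.pow_div_factorial_le_exp (x := (h:ℝ)) (by positivity) h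
        calc (h:ℝ) ^ h / (h.factorial : ℝ) ≤ Real.exp h := this
          _ = Real.exp 1 ^ h := by
              rw [← Real.exp_nat_mul, mul_one]
      have hfpos : (0:ℝ) < (h.factorial : ℝ) := by exact_mod_cast h.factorial_pos
      calc (N.choose h : ℝ) ≤ (N:ℝ) ^ h / (h.factorial : ℝ) := hc
        _ ≤ (N:ℝ) ^ h * Real.exp 1 ^ h / (h:ℝ) ^ h := by
            rw [div_le_div_iff₀ hfpos (by positivity)]
            calc (N:ℝ) ^ h * (h:ℝ) ^ h
                = ((h:ℝ) ^ h / (h.factorial : ℝ)) * (h.factorial : ℝ) * (N:ℝ) ^ h := by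
                  field_simp
              _ ≤ Real.exp 1 ^ h * (h.factorial : ℝ) * (N:ℝ) ^ h := by
                  apply mul_le_mul_of_nonneg_right _ (by positivity)
                  exact mul_le_mul_of_nonneg_right hfact (le_of_lt hfpos)
              _ = (N:ℝ) ^ h * Real.exp 1 ^ h * (h.factorial : ℝ) := by ring
    calc (s.card : ℝ) ≤ (N.choose h : ℝ) * ((q - 1 : ℕ) : ℝ) ^ h := h1
      _ ≤ ((N:ℝ) ^ h * Real.exp 1 ^ h / (h:ℝ) ^ h) * (q:ℝ) ^ h := by
          apply mul_le_mul h3 h2 (by positivity) (by positivity)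
      _ = (q:ℝ) ^ h * ((N:ℝ) ^ h * Real.exp 1 ^ h / (h:ℝ) ^ h) := by ring
  -- combine: A² ≤ X^h
  have hXpow : X ^ h = (q:ℝ) ^ h * ((N:ℝ) ^ h * Real.exp 1 ^ h / (h:ℝ) ^ h) * (q:ℝ) ^ h := by
    rw [hX, div_pow]
    rw [mul_pow, mul_pow, ← pow_mul]
    field_simp
    ring
  have hA2 : A ^ 2 ≤ X ^ h := by
    calc A ^ 2 ≤ (s.card : ℝ) * ∑ u ∈ s, ‖fcoef g u‖ ^ 2 := hCS
      _ ≤ ((q:ℝ) ^ h * ((N:ℝ) ^ h * Real.exp 1 ^ h / (h:ℝ) ^ h)) * (q:ℝ) ^ h := by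
          have h0sum : (0:ℝ) ≤ ∑ u ∈ s, ‖fcoef g u‖ ^ 2 :=
            Finset.sum_nonneg fun u _ => sq_nonneg _
          have h0c : (0:ℝ) ≤ (q:ℝ) ^ h * ((N:ℝ) ^ h * Real.exp 1 ^ h / (h:ℝ) ^ h) := by
            positivity
          exact mul_le_mul hcardle (hsum2.trans h2inf) h0sum h0c
      _ = X ^ h := by rw [hXpow]
  -- conclude via square roots
  have hRHS2 : (X ^ ((h : ℝ) / 2)) ^ 2 = X ^ h := by
    rw [← Real.rpow_natCast (X ^ ((h : ℝ) / 2)) 2, ← Real.rpow_mul hXnn]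
    rw [show ((h:ℝ)/2 * ((2:ℕ):ℝ)) = ((h:ℕ):ℝ) by push_cast; ring]
    rw [Real.rpow_natCast]
  have hRHSnn : 0 ≤ X ^ ((h : ℝ) / 2) := Real.rpow_nonneg hXnn _
  have : A ^ 2 ≤ (X ^ ((h : ℝ) / 2)) ^ 2 := by rw [hRHS2]; exact hA2
  exact (pow_le_pow_iff_left₀ hAnn hRHSnn two_ne_zero).mp this

end
end
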